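/- arXiv:2112.15081 — 4 statements merged into one kernel-verified Lean document; each statement's English description precedes it below -/
import Mathlib

section
/- Let n ≥ 1 and let π = π_1⋯π_k be a pattern (a finite sequence of nonnegative integers) with π_1 = 0 and π_i > 0 for all i > 1. Then the number of inversion sequences of length n avoiding π equals the sum over all subsets S ⊆ [n−1] of the number of S-inversion sequences avoiding the pattern π_2⋯π_k; i.e. |I_n(π)| = Σ_{S ⊆ [n−1]} |I_S(π_2⋯π_k)|. -/
/-- Two integer sequences of the same length are order isomorphic:
entries compare in the same way at every pair of positions. -/
def OrderIsoSeq (a b : List ℕ) : Prop :=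
  a.length = b.length ∧
  ∀ i j : ℕ, i < a.length → j < a.length →
    ((a[i]! < a[j]!) ↔ (b[i]! < b[j]!)) ∧ ((a[i]! = a[j]!) ↔ (b[i]! = b[j]!))

/-- A sequence `e` contains the pattern `p` if some (not necessarily consecutive)
subsequence of `e` is order isomorphic to `p`. -/
def ContainsPat (e p : List ℕ) : Prop :=
  ∃ s : List ℕ, s.Sublist e ∧ OrderIsoSeq s p

/-- A sequence `e` avoids the pattern `p` if it does not contain it. -/
def AvoidsPat (e p : List ℕ) : Prop := ¬ ContainsPat e p

/-- Inversion sequences of length `n`: `e = e_1 ⋯ e_n` with `0 ≤ e_i < i`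
(position `i` is stored at index `i - 1`). -/
def InvSeq (n : ℕ) : Set (List ℕ) :=
  {e | e.length = n ∧ ∀ i : ℕ, i < n → e[i]! < i + 1}

/-- `S`-inversion sequences for a finite set `S = {s_1 < ⋯ < s_n}` of positive
integers: sequences `e = e_1 ⋯ e_n` with `0 ≤ e_i < s_i`. -/
def SInvSeq (S : Finset ℕ) : Set (List ℕ) :=
  {e | e.length = S.card ∧ ∀ i : ℕ, i < S.card → e[i]! < (S.sort (· ≤ ·))[i]!}

/-- `I_n(p)`: inversion sequences of length `n` avoiding the pattern `p`. -/
def InvAvoid (n : ℕ) (p : List ℕ) : Set (List ℕ) :=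
  {e ∈ InvSeq n | AvoidsPat e p}

/-- `I_S(p)`: `S`-inversion sequences avoiding the pattern `p`. -/
def SInvAvoid (S : Finset ℕ) (p : List ℕ) : Set (List ℕ) :=
  {e ∈ SInvSeq S | AvoidsPat e p}

namespace Stmt0Aux

lemma gp (l : List ℕ) (i : ℕ) (h : i < l.length) : l[i]! = l[i] := getElem!_pos l i h

lemma gz (l : List ℕ) (i : ℕ) (h : l.length ≤ i) : l[i]! = 0 :=
  getElem!_neg l i (by omega)

lemma iso_map (s q : List ℕ) (hs : ∀ x ∈ s, 0 < x) :
    OrderIsoSeq (s.map (· - 1)) q ↔ OrderIsoSeq s q := by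
  have hl : (s.map (· - 1)).length = s.length := List.length_map _
  have key : ∀ i, i < s.length → (s.map (· - 1))[i]! = s[i]! - 1 := by
    intro i hi
    rw [gp _ i (by simpa using hi), gp s i hi, List.getElem_map]
  have pos : ∀ i, i < s.length → 0 < s[i]! := by
    intro i hi
    rw [gp s i hi]; exact hs _ (List.getElem_mem hi)
  constructor
  · rintro ⟨h1, h2⟩
    refine ⟨by omega, fun i j hi hj => ?_⟩
    obtain ⟨c1, c2⟩ := h2 i j (by omega) (by omega)
    rw [key i hi, key j hj] at c1 c2
    have := pos i hi; have := pos j hj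
    exact ⟨by omega, by omega⟩
  · rintro ⟨h1, h2⟩
    refine ⟨by omega, fun i j hi hj => ?_⟩
    rw [hl] at hi hj
    obtain ⟨c1, c2⟩ := h2 i j hi hj
    rw [key i hi, key j hj]
    have := pos i hi; have := pos j hj
    exact ⟨by omega, by omega⟩

lemma contains_map (l q : List ℕ) (hl : ∀ x ∈ l, 0 < x) :
    ContainsPat (l.map (· - 1)) q ↔ ContainsPat l q := by
  constructor
  · rintro ⟨s, hsub, hiso⟩
    obtain ⟨s', hs', rfl⟩ := List.sublist_map_iff.mp hsub
    exact ⟨s', hs', (iso_map s' q fun x hx => hl x (hs'.subset hx)).mp hiso⟩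
  · rintro ⟨s, hsub, hiso⟩
    exact ⟨s.map (· - 1), hsub.map _,
      (iso_map s q fun x hx => hl x (hsub.subset hx)).mpr hiso⟩

lemma contains_cons (r q : List ℕ) (hq : ∀ x ∈ q, 0 < x) :
    ContainsPat (0 :: r) (0 :: q) ↔ ContainsPat (r.filter (fun x => 0 < x)) q := by
  constructor
  · rintro ⟨s, hsub, hiso⟩
    obtain ⟨hlen, hcmp⟩ := hiso
    match s, hsub, hlen, hcmp with
    | a :: t, hsub, hlen, hcmp =>
    simp only [List.length_cons] at hlen
    have tpos : ∀ x ∈ t, 0 < x := by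
      intro x hx
      obtain ⟨i, hi, rfl⟩ := List.mem_iff_getElem.mp hx
      have := hcmp 0 (i + 1) (by simp) (by simp; omega)
      simp only [List.getElem!_cons_zero, List.getElem!_cons_succ] at this
      have hq' : 0 < q[i]! := by
        rw [gp q i (by omega)]; exact hq _ (List.getElem_mem (by omega))
      have : a < t[i]! := this.1.mpr hq'
      rw [gp t i hi] at this; omega
    have htr : t.Sublist (r.filter (fun x => 0 < x)) := by
      have h1 : t.Sublist (0 :: r) := (List.sublist_cons_self a t).trans hsub
      have h2 : (t.filter (fun x => 0 < x)).Sublist ((0 :: r).filter (fun x => 0 < x)) :=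
        h1.filter _
      rwa [List.filter_eq_self.mpr (by intro x hx; simpa using tpos x hx),
        List.filter_cons_of_neg (by simp)] at h2
    refine ⟨t, htr, ⟨by omega, fun i j hi hj => ?_⟩⟩
    have := hcmp (i + 1) (j + 1) (by simp; omega) (by simp; omega)
    simpa using this
  · rintro ⟨t, hsub, hiso⟩
    obtain ⟨hlen, hcmp⟩ := hiso
    have tpos : ∀ x ∈ t, 0 < x := by
      intro x hx
      have := hsub.subset hx
      simp only [List.mem_filter, decide_eq_true_eq] at this
      exact this.2
    refine ⟨0 :: t, (hsub.trans (List.filter_sublist (l := r))).cons₂ 0, by simp [hlen], ?_⟩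
    intro i j hi hj
    simp only [List.length_cons] at hi hj
    match i, j with
    | 0, 0 => simp
    | 0, j + 1 =>
      simp only [List.getElem!_cons_zero, List.getElem!_cons_succ]
      have h1 : 0 < t[j]! := by
        rw [gp t j (by omega)]; exact tpos _ (List.getElem_mem (by omega))
      have h2 : 0 < q[j]! := by
        rw [gp q j (by omega)]; exact hq _ (List.getElem_mem (by omega))
      exact ⟨by omega, by omega⟩
    | i + 1, 0 =>
      simp only [List.getElem!_cons_zero, List.getElem!_cons_succ]
      have h1 : 0 < t[i]! := by
        rw [gp t i (by omega)]; exact tpos _ (List.getElem_mem (by omega))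
      have h2 : 0 < q[i]! := by
        rw [gp q i (by omega)]; exact hq _ (List.getElem_mem (by omega))
      exact ⟨by omega, by omega⟩
    | i + 1, j + 1 =>
      simp only [List.getElem!_cons_succ]
      exact hcmp i j (by omega) (by omega)

/-! ### The decomposition maps -/

/-- The positive entries of `e`, each decreased by one. -/
def fof (e : List ℕ) : List ℕ := (e.filter (fun x => 0 < x)).map (· - 1)

/-- The list of indices (in increasing order) where `e` has a positive entry. -/
def posL (n : ℕ) (e : List ℕ) : List ℕ := (List.range n).filter (fun j => 0 < e[j]!)

/-- The set of indices in `[1, n-1]` where `e` has a positive entry. -/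
def Sof (n : ℕ) (e : List ℕ) : Finset ℕ := (Finset.Icc 1 (n-1)).filter (fun j => 0 < e[j]!)

/-- Reconstruction: from a set `S` of positions and a list `f` of values, build the
length-`n` list which at position `j ∈ S` has the corresponding entry of `f` plus one,
and `0` elsewhere. -/
def recon (n : ℕ) (S : Finset ℕ) (f : List ℕ) : List ℕ :=
  (List.range n).map (fun j => if j ∈ S then f[(S.sort (· ≤ ·)).idxOf j]! + 1 else 0)

lemma E1 (e : List ℕ) (n : ℕ) (h : e.length = n) :
    e = (List.range n).map (fun j => e[j]!) := by
  apply List.ext_getElem (by simp [h])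
  intro i h1 h2
  simp only [List.getElem_map, List.getElem_range]
  rw [gp e i h1]

lemma P1 (e : List ℕ) (n : ℕ) (h : e.length = n) :
    e.filter (fun x => 0 < x) = (posL n e).map (fun j => e[j]!) := by
  conv_lhs => rw [E1 e n h]
  rw [List.filter_map]
  rfl

lemma P3 (e : List ℕ) (n : ℕ) (h : e.length = n) :
    fof e = (posL n e).map (fun j => e[j]! - 1) := by
  rw [fof, P1 e n h, List.map_map]
  rfl

lemma P2 (e : List ℕ) (n : ℕ) (hn : 1 ≤ n) (h0 : ∀ j, 0 < e[j]! → 1 ≤ j) :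
    posL n e = (Sof n e).sort (· ≤ ·) := by
  refine (fun h1 h2 h3 => List.Perm.eq_of_pairwise' (r := (· ≤ ·)) h2 h3 h1) ?_ ?_ ?_
  · apply (List.perm_ext_iff_of_nodup ((List.nodup_range (n := n)).filter _)
      (Finset.sort_nodup _ _)).2
    intro j
    simp only [posL, Sof, List.mem_filter, List.mem_range, Finset.mem_sort,
      Finset.mem_filter, Finset.mem_Icc, decide_eq_true_eq]
    constructor
    · rintro ⟨h1, h2⟩
      exact ⟨⟨h0 j h2, by omega⟩, h2⟩
    · rintro ⟨⟨h1, h2⟩, h3⟩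
      exact ⟨by omega, h3⟩
  · exact (List.pairwise_lt_range.filter _).imp le_of_lt
  · exact Finset.pairwise_sort _ _

lemma recon_length (n : ℕ) (S : Finset ℕ) (f : List ℕ) : (recon n S f).length = n := by
  simp [recon]

lemma recon_get (n : ℕ) (S : Finset ℕ) (f : List ℕ) {j : ℕ} (h : j < n) :
    (recon n S f)[j]! = if j ∈ S then f[(S.sort (· ≤ ·)).idxOf j]! + 1 else 0 := by
  rw [gp _ j (by rw [recon_length]; omega)]
  simp [recon, h]

variable {n : ℕ} {S : Finset ℕ} {f : List ℕ}

lemma mem_lt (hn : 1 ≤ n) (hS : S ⊆ Finset.Icc 1 (n-1)) {j : ℕ} (hj : j ∈ S) :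
    1 ≤ j ∧ j < n := by
  have := hS hj
  rw [Finset.mem_Icc] at this
  omega

lemma Sof_recon (hn : 1 ≤ n) (hS : S ⊆ Finset.Icc 1 (n-1)) :
    Sof n (recon n S f) = S := by
  ext j
  simp only [Sof, Finset.mem_filter, Finset.mem_Icc]
  constructor
  · rintro ⟨⟨h1, h2⟩, h3⟩
    rw [recon_get n S f (by omega)] at h3
    by_contra hj
    rw [if_neg hj] at h3
    omega
  · intro hj
    obtain ⟨h1, h2⟩ := mem_lt hn hS hj
    refine ⟨⟨h1, by omega⟩, ?_⟩
    rw [recon_get n S f h2, if_pos hj]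
    omega

lemma posL_recon (hn : 1 ≤ n) (hS : S ⊆ Finset.Icc 1 (n-1)) :
    posL n (recon n S f) = S.sort (· ≤ ·) := by
  rw [P2 _ n hn, Sof_recon hn hS]
  intro j hj
  by_cases h : j < n
  · rw [recon_get n S f h] at hj
    by_cases hjS : j ∈ S
    · exact (mem_lt hn hS hjS).1
    · rw [if_neg hjS] at hj; omega
  · rw [gz _ j (by rw [recon_length]; omega)] at hj; omega

lemma fof_recon (hn : 1 ≤ n) (hS : S ⊆ Finset.Icc 1 (n-1)) (hf : f.length = S.card) :
    fof (recon n S f) = f := by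
  rw [P3 _ n (recon_length n S f), posL_recon hn hS]
  apply List.ext_getElem (by simp [Finset.length_sort, hf])
  intro k h1 h2
  rw [List.getElem_map]
  have hk : k < (S.sort (· ≤ ·)).length := by simpa using h1
  have hmem : (S.sort (· ≤ ·))[k] ∈ S := Finset.mem_sort _ |>.mp (List.getElem_mem hk)
  rw [recon_get n S f (mem_lt hn hS hmem).2, if_pos hmem,
    List.Nodup.idxOf_getElem (Finset.sort_nodup _ _) k hk, gp f k (by omega)]
  omega

lemma recon_invseq (hn : 1 ≤ n) (hS : S ⊆ Finset.Icc 1 (n-1)) (hf : f ∈ SInvSeq S) :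
    recon n S f ∈ InvSeq n := by
  refine ⟨recon_length n S f, fun j hj => ?_⟩
  rw [recon_get n S f hj]
  by_cases hjS : j ∈ S
  · rw [if_pos hjS]
    have hjs : j ∈ S.sort (· ≤ ·) := (Finset.mem_sort _).mpr hjS
    have hidx : (S.sort (· ≤ ·)).idxOf j < (S.sort (· ≤ ·)).length :=
      List.idxOf_lt_length_iff.mpr hjs
    have h2 := hf.2 ((S.sort (· ≤ ·)).idxOf j) (by simpa using hidx)
    rw [gp _ _ hidx, List.getElem_idxOf hidx] at h2
    omega
  · rw [if_neg hjS]; omega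

lemma invseq_zero {e : List ℕ} (hn : 1 ≤ n) (he : e ∈ InvSeq n) : e[0]! = 0 := by
  have := he.2 0 (by omega)
  omega

lemma invseq_pos_pos {e : List ℕ} (hn : 1 ≤ n) (he : e ∈ InvSeq n) :
    ∀ j, 0 < e[j]! → 1 ≤ j := by
  intro j hj
  rcases Nat.eq_zero_or_pos j with rfl | h
  · rw [invseq_zero hn he] at hj; omega
  · exact h

lemma fof_sinvseq {e : List ℕ} (hn : 1 ≤ n) (he : e ∈ InvSeq n) :
    fof e ∈ SInvSeq (Sof n e) := by
  have h0 := invseq_pos_pos hn he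
  have hpos := P2 e n hn h0
  have hlen : (fof e).length = (Sof n e).card := by
    rw [P3 e n he.1, List.length_map, hpos, Finset.length_sort]
  refine ⟨hlen, fun i hi => ?_⟩
  have hil : i < (posL n e).length := by
    rw [hpos, Finset.length_sort]; exact hi
  have hmem0 : (posL n e)[i] ∈ posL n e := List.getElem_mem hil
  have hmem : (posL n e)[i] < n ∧ 0 < e[(posL n e)[i]]! := by
    have := hmem0
    simp only [posL, List.mem_filter, List.mem_range, decide_eq_true_eq] at this
    exact this
  have hb := he.2 _ hmem.1
  have hfk : (fof e)[i]! = e[(posL n e)[i]]! - 1 := by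
    rw [P3 e n he.1, gp _ i (by simpa using hil), List.getElem_map]
  have hsi : ((Sof n e).sort (· ≤ ·))[i]! = (posL n e)[i] := by
    rw [← hpos, gp _ i hil]
  rw [hfk, hsi]
  omega

lemma recon_fof {e : List ℕ} (hn : 1 ≤ n) (he : e ∈ InvSeq n) :
    recon n (Sof n e) (fof e) = e := by
  have h0 := invseq_pos_pos hn he
  have hpos := P2 e n hn h0
  apply List.ext_getElem (by rw [recon_length, he.1])
  intro j h1 h2
  have hjn : j < n := by rwa [recon_length] at h1
  rw [← gp _ j h1, ← gp e j h2, recon_get _ _ _ hjn]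
  by_cases hjS : j ∈ Sof n e
  · rw [if_pos hjS]
    have hjs : j ∈ (Sof n e).sort (· ≤ ·) := (Finset.mem_sort _).mpr hjS
    have hidx : ((Sof n e).sort (· ≤ ·)).idxOf j < ((Sof n e).sort (· ≤ ·)).length :=
      List.idxOf_lt_length_iff.mpr hjs
    have hkl : ((Sof n e).sort (· ≤ ·)).idxOf j < (posL n e).length := by
      rw [hpos]; exact hidx
    have hfk : (fof e)[((Sof n e).sort (· ≤ ·)).idxOf j]! =
        e[(posL n e)[((Sof n e).sort (· ≤ ·)).idxOf j]]! - 1 := by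
      rw [P3 e n he.1, gp _ _ (by simpa using hkl), List.getElem_map]
    have hjk : (posL n e)[((Sof n e).sort (· ≤ ·)).idxOf j] = j := by
      have h := List.getElem_idxOf hidx
      simp only [hpos]
      exact h
    have hej : 0 < e[j]! := by
      have h := hjS
      simp only [Sof, Finset.mem_filter, decide_eq_true_eq] at h
      exact h.2
    rw [hfk, hjk]
    omega
  · rw [if_neg hjS]
    rcases Nat.eq_zero_or_pos j with rfl | hj1
    · exact (invseq_zero hn he).symm
    · by_contra hne
      apply hjS
      simp only [Sof, Finset.mem_filter, Finset.mem_Icc, decide_eq_true_eq]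
      exact ⟨⟨hj1, by omega⟩, by omega⟩

/-! ### Finiteness and cardinality of disjoint unions -/

lemma finite_bdd (m B : ℕ) : {l : List ℕ | l.length = m ∧ ∀ x ∈ l, x < B}.Finite := by
  induction m with
  | zero =>
    apply Set.Finite.subset (Set.finite_singleton ([] : List ℕ))
    rintro l ⟨h, -⟩
    simp [List.length_eq_zero_iff.mp h]
  | succ m ih =>
    apply Set.Finite.subset (((Set.finite_Iio B).prod ih).image
      (fun q : ℕ × List ℕ => q.1 :: q.2))
    rintro l ⟨hl, hb⟩
    match l with
    | a :: t =>
      exact ⟨(a, t), ⟨hb a (by simp), by simpa using hl,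
        fun x hx => hb x (by simp [hx])⟩, rfl⟩

lemma ncard_biUnion {α ι : Type*} (t : Finset ι) (f : ι → Set α)
    (hfin : ∀ i ∈ t, (f i).Finite)
    (hdisj : ∀ i ∈ t, ∀ j ∈ t, i ≠ j → Disjoint (f i) (f j)) :
    (⋃ i ∈ t, f i).ncard = ∑ i ∈ t, (f i).ncard := by
  classical
  induction t using Finset.induction_on with
  | empty => simp
  | @insert a s ha ih =>
    have h1 : (⋃ i ∈ insert a s, f i) = f a ∪ ⋃ i ∈ s, f i := by
      simp [Set.biUnion_insert]
    rw [h1, Finset.sum_insert ha, Set.ncard_union_eq ?_ ?_ ?_,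
      ih (fun i hi => hfin i (Finset.mem_insert_of_mem hi))
        (fun i hi j hj hij => hdisj i (Finset.mem_insert_of_mem hi) j
          (Finset.mem_insert_of_mem hj) hij)]
    · rw [Set.disjoint_iUnion_right]
      intro i
      rw [Set.disjoint_iUnion_right]
      intro hi
      exact hdisj a (Finset.mem_insert_self a s) i (Finset.mem_insert_of_mem hi)
        (by rintro rfl; exact ha hi)
    · exact hfin a (Finset.mem_insert_self a s)
    · exact Set.Finite.biUnion s.finite_toSet
        (fun i hi => hfin i (Finset.mem_insert_of_mem hi))

end Stmt0Aux

/-- Theorem: for `n ≥ 1` and a pattern `π = 0 :: p` whose first entry is `0` and whose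
remaining entries are all positive, `|I_n(π)| = Σ_{S ⊆ [n-1]} |I_S(p)|`. -/
theorem stmt_0 (n : ℕ) (hn : 1 ≤ n) (p : List ℕ) (hp : ∀ x ∈ p, 0 < x) :
    (InvAvoid n (0 :: p)).ncard =
      ∑ S ∈ (Finset.Icc 1 (n - 1)).powerset, (SInvAvoid S p).ncard := by
  classical
  have avoid_iff : ∀ e ∈ InvSeq n, (AvoidsPat e (0 :: p) ↔ AvoidsPat (Stmt0Aux.fof e) p) := by
    intro e he
    match e, he with
    | [], he => exact absurd he.1 (by simp; omega)
    | a :: t, he =>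
      have ha : a = 0 := by
        have := he.2 0 (by omega)
        simpa using this
      subst ha
      have hfof : Stmt0Aux.fof (0 :: t) = (t.filter (fun x => 0 < x)).map (· - 1) := by
        simp [Stmt0Aux.fof, List.filter_cons_of_neg]
      rw [hfof]
      exact not_congr ((Stmt0Aux.contains_cons t p hp).trans
        (Stmt0Aux.contains_map _ _ (fun x hx => by
          simp only [List.mem_filter, decide_eq_true_eq] at hx
          exact hx.2)).symm)
  have key : InvAvoid n (0 :: p) =
      ⋃ S ∈ (Finset.Icc 1 (n - 1)).powerset, Stmt0Aux.recon n S '' (SInvAvoid S p) := by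
    ext e
    simp only [Set.mem_iUnion, Set.mem_image, exists_prop]
    constructor
    · rintro ⟨he, hav⟩
      refine ⟨Stmt0Aux.Sof n e, Finset.mem_powerset.mpr (Finset.filter_subset _ _),
        Stmt0Aux.fof e, ⟨Stmt0Aux.fof_sinvseq hn he, (avoid_iff e he).mp hav⟩, Stmt0Aux.recon_fof hn he⟩
    · rintro ⟨S, hS, f, ⟨hf1, hf2⟩, rfl⟩
      have hS' := Finset.mem_powerset.mp hS
      have h1 : Stmt0Aux.recon n S f ∈ InvSeq n := Stmt0Aux.recon_invseq hn hS' hf1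
      refine ⟨h1, ?_⟩
      rw [avoid_iff _ h1, Stmt0Aux.fof_recon hn hS' hf1.1]
      exact hf2
  have hfin : ∀ S ∈ (Finset.Icc 1 (n - 1)).powerset, (SInvAvoid S p).Finite := by
    intro S hS
    apply Set.Finite.subset (Stmt0Aux.finite_bdd S.card n)
    rintro l ⟨hl1, -⟩
    refine ⟨hl1.1, fun x hx => ?_⟩
    obtain ⟨i, hi, rfl⟩ := List.mem_iff_getElem.mp hx
    have hi' : i < S.card := by rw [← hl1.1]; exact hi
    have h2 := hl1.2 i hi'
    have hil : i < (S.sort (· ≤ ·)).length := by rw [Finset.length_sort]; exact hi'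
    have hsi : ((S.sort (· ≤ ·))[i]! : ℕ) < n := by
      rw [Stmt0Aux.gp _ i hil]
      have hm : (S.sort (· ≤ ·))[i] ∈ S := (Finset.mem_sort _).mp (List.getElem_mem hil)
      exact (Stmt0Aux.mem_lt hn (Finset.mem_powerset.mp hS) hm).2
    rw [← Stmt0Aux.gp l i hi]
    omega
  rw [key, Stmt0Aux.ncard_biUnion _ _ (fun S hS => (hfin S hS).image _) ?_]
  · refine Finset.sum_congr rfl fun S hS => ?_
    apply Set.ncard_image_of_injOn
    intro f hf g hg hfg
    have hS' := Finset.mem_powerset.mp hS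
    rw [← Stmt0Aux.fof_recon hn hS' hf.1.1, ← Stmt0Aux.fof_recon hn hS' hg.1.1, hfg]
  · intro S hS T hT hST
    rw [Set.disjoint_left]
    rintro e ⟨f, hf, rfl⟩ ⟨g, hg, heq⟩
    apply hST
    calc S = Stmt0Aux.Sof n (Stmt0Aux.recon n S f) := (Stmt0Aux.Sof_recon hn (Finset.mem_powerset.mp hS)).symm
    _ = Stmt0Aux.Sof n (Stmt0Aux.recon n T g) := by rw [heq]
    _ = T := Stmt0Aux.Sof_recon hn (Finset.mem_powerset.mp hT)
end

section
/- For any finite set S of positive integers, the number of S-inversion sequences avoiding the pattern 210 equals the number of S-inversion sequences avoiding the pattern 201; i.e. |I_S(210)| = |I_S(201)|. -/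
namespace WilfB

/-- running maximum -/
def maxL (l : List ℕ) : ℕ := l.foldr max 0

@[simp] lemma maxL_nil : maxL [] = 0 := rfl
@[simp] lemma maxL_cons (a : ℕ) (l : List ℕ) : maxL (a :: l) = max a (maxL l) := rfl

lemma maxL_append_singleton (h : List ℕ) (v : ℕ) :
    maxL (h ++ [v]) = max (maxL h) v := by
  induction h with
  | nil => simp [maxL]
  | cons a t ih => simp only [List.cons_append, maxL_cons, ih, max_assoc]

lemma le_maxL (h : List ℕ) (i : ℕ) (hi : i < h.length) : h[i]! ≤ maxL h := by
  induction h generalizing i with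
  | nil => simp at hi
  | cons a t ih =>
    cases i with
    | zero => simp
    | succ n =>
      simp only [List.getElem!_cons_succ, maxL_cons]
      exact le_trans (ih n (by simpa using hi)) (le_max_right _ _)

lemma exists_lt_maxL (h : List ℕ) (x : ℕ) (hx : x < maxL h) :
    ∃ i < h.length, x < h[i]! := by
  induction h with
  | nil => simp [maxL] at hx
  | cons a t ih =>
    simp only [maxL_cons, lt_max_iff] at hx
    rcases hx with hx | hx
    · exact ⟨0, by simp, by simpa using hx⟩
    · obtain ⟨i, hi, hxi⟩ := ih hx
      exact ⟨i + 1, by simpa using hi, by simpa using hxi⟩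






lemma getElem!_append_left (h t : List ℕ) (i : ℕ) (hi : i < h.length) :
    (h ++ t)[i]! = h[i]! := by
  have h1 : i < (h ++ t).length := by simp; omega
  rw [getElem!_pos (h ++ t) i h1, getElem!_pos h i hi]
  exact List.getElem_append_left _

lemma getElem!_append_self (h : List ℕ) (v : ℕ) (t : List ℕ) :
    (h ++ v :: t)[h.length]! = v := by
  have h1 : h.length < (h ++ v :: t).length := by simp
  rw [getElem!_pos (h ++ v :: t) h.length h1]
  rw [List.getElem_append_right (le_refl _)]
  simp





lemma single_sublist : ∀ (e : List ℕ) (i : ℕ), i < e.length → [e[i]!].Sublist e := by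
  intro e
  induction e with
  | nil => intro i hi; simp at hi
  | cons a t ih =>
    intro i hi
    cases i with
    | zero => simpa using List.cons_sublist_cons.2 (List.nil_sublist t)
    | succ n =>
      simp only [List.getElem!_cons_succ]
      exact (ih n (by simpa using hi)).cons a

lemma double_sublist : ∀ (e : List ℕ) (i j : ℕ), i < j → j < e.length →
    [e[i]!, e[j]!].Sublist e := by
  intro e
  induction e with
  | nil => intro i j _ hj; simp at hj
  | cons a t ih =>
    intro i j hij hj
    cases i with
    | zero =>
      obtain ⟨m, rfl⟩ : ∃ m, j = m + 1 := ⟨j - 1, by omega⟩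
      simp only [List.getElem!_cons_zero, List.getElem!_cons_succ]
      exact List.cons_sublist_cons.2 (single_sublist t m (by simpa using hj))
    | succ n =>
      obtain ⟨m, rfl⟩ : ∃ m, j = m + 1 := ⟨j - 1, by omega⟩
      simp only [List.getElem!_cons_succ]
      exact (ih n m (by omega) (by simpa using hj)).cons a

lemma triple_sublist : ∀ (e : List ℕ) (i j k : ℕ), i < j → j < k → k < e.length →
    [e[i]!, e[j]!, e[k]!].Sublist e := by
  intro e
  induction e with
  | nil => intro i j k _ _ hk; simp at hk
  | cons a t ih =>
    intro i j k hij hjk hk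
    cases i with
    | zero =>
      obtain ⟨m, rfl⟩ : ∃ m, j = m + 1 := ⟨j - 1, by omega⟩
      obtain ⟨p, rfl⟩ : ∃ p, k = p + 1 := ⟨k - 1, by omega⟩
      simp only [List.getElem!_cons_zero, List.getElem!_cons_succ]
      exact List.cons_sublist_cons.2 (double_sublist t m p (by omega) (by simpa using hk))
    | succ n =>
      obtain ⟨m, rfl⟩ : ∃ m, j = m + 1 := ⟨j - 1, by omega⟩
      obtain ⟨p, rfl⟩ : ∃ p, k = p + 1 := ⟨k - 1, by omega⟩
      simp only [List.getElem!_cons_succ]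
      exact (ih n m p (by omega) (by omega) (by simpa using hk)).cons a






def P201 (e : List ℕ) : Prop :=
  ∃ i j k, i < j ∧ j < k ∧ k < e.length ∧ e[j]! < e[k]! ∧ e[k]! < e[i]!

def P210 (e : List ℕ) : Prop :=
  ∃ i j k, i < j ∧ j < k ∧ k < e.length ∧ e[k]! < e[j]! ∧ e[j]! < e[i]!

lemma contains_of_triple (e : List ℕ) (i j k : ℕ) (hij : i < j) (hjk : j < k)
    (hk : k < e.length) (p : List ℕ) (hp : p.length = 3)
    (hrel : OrderIsoSeq [e[i]!, e[j]!, e[k]!] p) : ContainsPat e p :=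
  ⟨_, triple_sublist e i j k hij hjk hk, hrel⟩

lemma contains_to_triple (e p : List ℕ) (hp : p.length = 3) (h : ContainsPat e p) :
    ∃ i j k, i < j ∧ j < k ∧ k < e.length ∧
      OrderIsoSeq [e[i]!, e[j]!, e[k]!] p := by
  obtain ⟨s, hsub, hiso⟩ := h
  have hlen : s.length = 3 := hiso.1.trans hp
  obtain ⟨f, hf⟩ := List.sublist_iff_exists_fin_orderEmbedding_get_eq.1 hsub
  have h0 : (0 : ℕ) < s.length := by omega
  have h1 : (1 : ℕ) < s.length := by omega
  have h2 : (2 : ℕ) < s.length := by omega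
  refine ⟨(f ⟨0, h0⟩).val, (f ⟨1, h1⟩).val, (f ⟨2, h2⟩).val, ?_, ?_, (f ⟨2, h2⟩).isLt, ?_⟩
  · exact f.strictMono (by simp [Fin.lt_def])
  · exact f.strictMono (by simp [Fin.lt_def])
  · have g0 : e[(f ⟨0, h0⟩).val]! = s[0]! := by
      rw [getElem!_pos e _ (f ⟨0, h0⟩).isLt, getElem!_pos s _ h0]
      exact (hf ⟨0, h0⟩).symm
    have g1 : e[(f ⟨1, h1⟩).val]! = s[1]! := by
      rw [getElem!_pos e _ (f ⟨1, h1⟩).isLt, getElem!_pos s _ h1]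
      exact (hf ⟨1, h1⟩).symm
    have g2 : e[(f ⟨2, h2⟩).val]! = s[2]! := by
      rw [getElem!_pos e _ (f ⟨2, h2⟩).isLt, getElem!_pos s _ h2]
      exact (hf ⟨2, h2⟩).symm
    obtain ⟨a, b, c, rfl⟩ := List.length_eq_three.1 hlen
    simp only [List.getElem!_cons_zero, List.getElem!_cons_succ] at g0 g1 g2
    rw [g0, g1, g2]
    exact hiso

lemma contains_201_iff (e : List ℕ) : ContainsPat e [2, 0, 1] ↔ P201 e := by
  constructor
  · intro h
    obtain ⟨i, j, k, hij, hjk, hk, hiso⟩ := contains_to_triple e _ (by rfl) h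
    obtain ⟨-, hrel⟩ := hiso
    have r1 := hrel 1 2 (by simp) (by simp)
    have r2 := hrel 0 2 (by simp) (by simp)
    simp only [List.getElem!_cons_zero, List.getElem!_cons_succ] at r1 r2
    refine ⟨i, j, k, hij, hjk, hk, ?_, ?_⟩ <;> omega
  · rintro ⟨i, j, k, hij, hjk, hk, h1, h2⟩
    refine contains_of_triple e i j k hij hjk hk _ rfl ⟨rfl, ?_⟩
    intro i' j' hi' hj'
    simp only [List.length_cons, List.length_nil] at hi' hj'
    interval_cases i' <;> interval_cases j' <;>
      simp only [List.getElem!_cons_zero, List.getElem!_cons_succ] <;>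
      refine ⟨?_, ?_⟩ <;> first | trivial | omega

lemma contains_210_iff (e : List ℕ) : ContainsPat e [2, 1, 0] ↔ P210 e := by
  constructor
  · intro h
    obtain ⟨i, j, k, hij, hjk, hk, hiso⟩ := contains_to_triple e _ (by rfl) h
    obtain ⟨-, hrel⟩ := hiso
    have r1 := hrel 1 2 (by simp) (by simp)
    have r2 := hrel 0 1 (by simp) (by simp)
    simp only [List.getElem!_cons_zero, List.getElem!_cons_succ] at r1 r2
    refine ⟨i, j, k, hij, hjk, hk, ?_, ?_⟩ <;> omega
  · rintro ⟨i, j, k, hij, hjk, hk, h1, h2⟩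
    refine contains_of_triple e i j k hij hjk hk _ rfl ⟨rfl, ?_⟩
    intro i' j' hi' hj'
    simp only [List.length_cons, List.length_nil] at hi' hj'
    interval_cases i' <;> interval_cases j' <;>
      simp only [List.getElem!_cons_zero, List.getElem!_cons_succ] <;>
      refine ⟨?_, ?_⟩ <;> first | trivial | omega


lemma P201_mono (l t : List ℕ) (h : P201 l) : P201 (l ++ t) := by
  obtain ⟨i, j, k, hij, hjk, hk, h1, h2⟩ := h
  refine ⟨i, j, k, hij, hjk, by simp; omega, ?_, ?_⟩ <;>
    rw [getElem!_append_left _ _ _ (by omega), getElem!_append_left _ _ _ (by omega)] <;>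
    assumption

lemma P210_mono (l t : List ℕ) (h : P210 l) : P210 (l ++ t) := by
  obtain ⟨i, j, k, hij, hjk, hk, h1, h2⟩ := h
  refine ⟨i, j, k, hij, hjk, by simp; omega, ?_, ?_⟩ <;>
    rw [getElem!_append_left _ _ _ (by omega), getElem!_append_left _ _ _ (by omega)] <;>
    assumption

lemma P201_snoc (h : List ℕ) (v : ℕ) :
    P201 (h ++ [v]) ↔ P201 h ∨ ∃ i j, i < j ∧ j < h.length ∧ h[j]! < v ∧ v < h[i]! := by
  constructor
  · rintro ⟨i, j, k, hij, hjk, hk, h1, h2⟩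
    simp only [List.length_append, List.length_cons, List.length_nil] at hk
    by_cases hkl : k < h.length
    · left
      refine ⟨i, j, k, hij, hjk, hkl, ?_, ?_⟩ <;>
      · rw [getElem!_append_left _ _ _ (by omega), getElem!_append_left _ _ _ (by omega)] at h1 h2
        first | exact h1 | exact h2
    · right
      have hkk : k = h.length := by omega
      subst hkk
      rw [getElem!_append_self] at h1 h2
      rw [getElem!_append_left _ _ _ (by omega)] at h1
      rw [getElem!_append_left _ _ _ (by omega)] at h2
      exact ⟨i, j, hij, by omega, h1, h2⟩
  · rintro (hp | ⟨i, j, hij, hj, h1, h2⟩)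
    · exact P201_mono _ _ hp
    · refine ⟨i, j, h.length, hij, by omega, by simp, ?_, ?_⟩
      · rw [getElem!_append_left _ _ _ (by omega), getElem!_append_self]; exact h1
      · rw [getElem!_append_self, getElem!_append_left _ _ _ (by omega)]; exact h2

lemma P210_snoc (h : List ℕ) (v : ℕ) :
    P210 (h ++ [v]) ↔ P210 h ∨ ∃ i j, i < j ∧ j < h.length ∧ v < h[j]! ∧ h[j]! < h[i]! := by
  constructor
  · rintro ⟨i, j, k, hij, hjk, hk, h1, h2⟩
    simp only [List.length_append, List.length_cons, List.length_nil] at hk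
    by_cases hkl : k < h.length
    · left
      refine ⟨i, j, k, hij, hjk, hkl, ?_, ?_⟩ <;>
      · rw [getElem!_append_left _ _ _ (by omega), getElem!_append_left _ _ _ (by omega)] at h1 h2
        first | exact h1 | exact h2
    · have hkk : k = h.length := by omega
      subst hkk
      rw [getElem!_append_self] at h1
      rw [getElem!_append_left _ _ _ (by omega)] at h1
      rw [getElem!_append_left _ _ _ (by omega), getElem!_append_left _ _ _ (by omega)] at h2
      exact Or.inr ⟨i, j, hij, by omega, h1, h2⟩
  · rintro (hp | ⟨i, j, hij, hj, h1, h2⟩)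
    · exact P210_mono _ _ hp
    · refine ⟨i, j, h.length, hij, by omega, by simp, ?_, ?_⟩
      · rw [getElem!_append_self, getElem!_append_left _ _ _ (by omega)]; exact h1
      · rw [getElem!_append_left _ _ _ (by omega), getElem!_append_left _ _ _ (by omega)]; exact h2


def avoidsB : ℕ → Finset ℕ → List ℕ → Prop
  | _, _, [] => True
  | M, F, v :: rest =>
    if M ≤ v then avoidsB v F rest
    else v ∉ F ∧ avoidsB M (F ∪ Finset.Ico (v + 1) M) rest

def avoidsA : ℕ → ℕ → List ℕ → Prop
  | _, _, [] => True
  | M, L, v :: rest =>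
    if M ≤ v then avoidsA v L rest
    else L ≤ v ∧ avoidsA M v rest

lemma snoc_left (h : List ℕ) (v : ℕ) (i : ℕ) (hi : i < h.length) :
    (h ++ [v])[i]! = h[i]! := getElem!_append_left h [v] i hi

lemma snoc_self (h : List ℕ) (v : ℕ) : (h ++ [v])[h.length]! = v :=
  getElem!_append_self h v []

lemma scanB_iff : ∀ (e h : List ℕ) (F : Finset ℕ),
    (∀ x, x ∈ F ↔ ∃ i j, i < j ∧ j < h.length ∧ h[j]! < x ∧ x < h[i]!) →
    ¬ P201 h →
    (avoidsB (maxL h) F e ↔ ¬ P201 (h ++ e)) := by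
  intro e
  induction e with
  | nil =>
    intro h F _ hP
    rw [List.append_nil]
    simp [avoidsB, hP]
  | cons v rest IH =>
    intro h F hF hP
    have hassoc : (h ++ [v]) ++ rest = h ++ v :: rest := by simp
    by_cases hMv : maxL h ≤ v
    · -- record step
      have hM' : maxL (h ++ [v]) = v := by rw [maxL_append_singleton]; omega
      have hF' : ∀ x, x ∈ F ↔ ∃ i j, i < j ∧ j < (h ++ [v]).length ∧
          (h ++ [v])[j]! < x ∧ x < (h ++ [v])[i]! := by
        intro x
        rw [hF x]
        constructor
        · rintro ⟨i, j, hij, hj, h1, h2⟩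
          refine ⟨i, j, hij, by simp; omega, ?_, ?_⟩
          · rw [snoc_left h v j (by omega)]; exact h1
          · rw [snoc_left h v i (by omega)]; exact h2
        · rintro ⟨i, j, hij, hj, h1, h2⟩
          simp only [List.length_append, List.length_cons, List.length_nil] at hj
          by_cases hjl : j < h.length
          · rw [snoc_left h v j (by omega)] at h1
            rw [snoc_left h v i (by omega)] at h2
            exact ⟨i, j, hij, hjl, h1, h2⟩
          · exfalso
            have hje : j = h.length := by omega
            subst hje
            rw [snoc_self] at h1
            rw [snoc_left h v i (by omega)] at h2
            have := le_maxL h i (by omega)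
            omega
      have hP' : ¬ P201 (h ++ [v]) := by
        rw [P201_snoc]
        rintro (hp | ⟨i, j, hij, hj, h1, h2⟩)
        · exact hP hp
        · have := le_maxL h i (by omega)
          omega
      have hstep : avoidsB (maxL h) F (v :: rest) = avoidsB v F rest := by
        simp [avoidsB, hMv]
      have hIH := IH (h ++ [v]) F hF' hP'
      rw [hM', hassoc] at hIH
      rw [hstep]
      exact hIH
    · -- low step
      push_neg at hMv
      have hM' : maxL (h ++ [v]) = maxL h := by rw [maxL_append_singleton]; omega
      have hunf : avoidsB (maxL h) F (v :: rest) =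
          (v ∉ F ∧ avoidsB (maxL h) (F ∪ Finset.Ico (v + 1) (maxL h)) rest) := by
        simp [avoidsB, not_le.2 hMv]
      have hF' : ∀ x, x ∈ F ∪ Finset.Ico (v + 1) (maxL (h ++ [v])) ↔
          ∃ i j, i < j ∧ j < (h ++ [v]).length ∧
          (h ++ [v])[j]! < x ∧ x < (h ++ [v])[i]! := by
        intro x
        rw [hM']
        simp only [Finset.mem_union, Finset.mem_Ico]
        constructor
        · rintro (hx | ⟨hx1, hx2⟩)
          · obtain ⟨i, j, hij, hj, h1, h2⟩ := (hF x).1 hx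
            refine ⟨i, j, hij, by simp; omega, ?_, ?_⟩
            · rw [snoc_left h v j (by omega)]; exact h1
            · rw [snoc_left h v i (by omega)]; exact h2
          · obtain ⟨i, hi, hxi⟩ := exists_lt_maxL h x hx2
            refine ⟨i, h.length, hi, by simp, ?_, ?_⟩
            · rw [snoc_self]; omega
            · rw [snoc_left h v i hi]; exact hxi
        · rintro ⟨i, j, hij, hj, h1, h2⟩
          simp only [List.length_append, List.length_cons, List.length_nil] at hj
          by_cases hjl : j < h.length
          · rw [snoc_left h v j (by omega)] at h1
            rw [snoc_left h v i (by omega)] at h2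
            exact Or.inl ((hF x).2 ⟨i, j, hij, hjl, h1, h2⟩)
          · have hje : j = h.length := by omega
            subst hje
            rw [snoc_self] at h1
            rw [snoc_left h v i (by omega)] at h2
            have := le_maxL h i (by omega)
            right; omega
      have hIH := IH (h ++ [v]) (F ∪ Finset.Ico (v + 1) (maxL (h ++ [v]))) hF'
      rw [hM', hassoc] at hIH
      rw [hunf]
      constructor
      · rintro ⟨hvF, hrest⟩
        have hP' : ¬ P201 (h ++ [v]) := by
          rw [P201_snoc]
          rintro (hp | ⟨i, j, hij, hj, h1, h2⟩)
          · exact hP hp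
          · exact hvF ((hF v).2 ⟨i, j, hij, hj, h1, h2⟩)
        exact (hIH hP').1 hrest
      · intro hnp
        have hP' : ¬ P201 (h ++ [v]) := by
          intro hp
          exact hnp (hassoc ▸ P201_mono (h ++ [v]) rest hp)
        have hvF : v ∉ F := by
          intro hv
          obtain ⟨i, j, hij, hj, h1, h2⟩ := (hF v).1 hv
          exact hP' ((P201_snoc h v).2 (Or.inr ⟨i, j, hij, hj, h1, h2⟩))
        exact ⟨hvF, (hIH hP').2 hnp⟩

lemma scanA_iff : ∀ (e h : List ℕ) (L : ℕ),
    (∀ i j, i < j → j < h.length → h[j]! < h[i]! → h[j]! ≤ L) →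
    (L = 0 ∨ ∃ i j, i < j ∧ j < h.length ∧ h[j]! < h[i]! ∧ h[j]! = L) →
    ¬ P210 h →
    (avoidsA (maxL h) L e ↔ ¬ P210 (h ++ e)) := by
  intro e
  induction e with
  | nil =>
    intro h L _ _ hP
    rw [List.append_nil]
    simp [avoidsA, hP]
  | cons v rest IH =>
    intro h L hL1 hL2 hP
    have hassoc : (h ++ [v]) ++ rest = h ++ v :: rest := by simp
    by_cases hMv : maxL h ≤ v
    · -- record step
      have hM' : maxL (h ++ [v]) = v := by rw [maxL_append_singleton]; omega
      have hL1' : ∀ i j, i < j → j < (h ++ [v]).length →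
          (h ++ [v])[j]! < (h ++ [v])[i]! → (h ++ [v])[j]! ≤ L := by
        intro i j hij hj hlt
        simp only [List.length_append, List.length_cons, List.length_nil] at hj
        by_cases hjl : j < h.length
        · rw [snoc_left h v j (by omega)] at hlt ⊢
          rw [snoc_left h v i (by omega)] at hlt
          exact hL1 i j hij hjl hlt
        · exfalso
          have hje : j = h.length := by omega
          subst hje
          rw [snoc_self, snoc_left h v i (by omega)] at hlt
          have := le_maxL h i (by omega)
          omega
      have hL2' : L = 0 ∨ ∃ i j, i < j ∧ j < (h ++ [v]).length ∧
          (h ++ [v])[j]! < (h ++ [v])[i]! ∧ (h ++ [v])[j]! = L := by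
        rcases hL2 with h0 | ⟨i, j, hij, hj, h1, h2⟩
        · exact Or.inl h0
        · refine Or.inr ⟨i, j, hij, by simp; omega, ?_, ?_⟩
          · rw [snoc_left h v j (by omega), snoc_left h v i (by omega)]; exact h1
          · rw [snoc_left h v j (by omega)]; exact h2
      have hP' : ¬ P210 (h ++ [v]) := by
        rw [P210_snoc]
        rintro (hp | ⟨i, j, hij, hj, h1, h2⟩)
        · exact hP hp
        · have := le_maxL h j (by omega)
          omega
      have hstep : avoidsA (maxL h) L (v :: rest) = avoidsA v L rest := by
        simp [avoidsA, hMv]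
      have hIH := IH (h ++ [v]) L hL1' hL2' hP'
      rw [hM', hassoc] at hIH
      rw [hstep]
      exact hIH
    · -- low step
      push_neg at hMv
      have hM' : maxL (h ++ [v]) = maxL h := by rw [maxL_append_singleton]; omega
      have hunf : avoidsA (maxL h) L (v :: rest) = (L ≤ v ∧ avoidsA (maxL h) v rest) := by
        simp [avoidsA, not_le.2 hMv]
      rw [hunf]
      have hL1' : L ≤ v → ∀ i j, i < j → j < (h ++ [v]).length →
          (h ++ [v])[j]! < (h ++ [v])[i]! → (h ++ [v])[j]! ≤ v := by
        intro hLv i j hij hj hlt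
        simp only [List.length_append, List.length_cons, List.length_nil] at hj
        by_cases hjl : j < h.length
        · rw [snoc_left h v j (by omega)] at hlt ⊢
          by_cases hil : i < h.length
          · rw [snoc_left h v i (by omega)] at hlt
            exact le_trans (hL1 i j hij hjl hlt) hLv
          · have hie : i = h.length := by omega
            subst hie
            rw [snoc_self] at hlt
            exact le_trans (le_maxL h j hjl) (by omega)
        · have hje : j = h.length := by omega
          subst hje
          rw [snoc_self]
      have hL2' : v = 0 ∨ ∃ i j, i < j ∧ j < (h ++ [v]).length ∧
          (h ++ [v])[j]! < (h ++ [v])[i]! ∧ (h ++ [v])[j]! = v := by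
        obtain ⟨i, hi, hvi⟩ := exists_lt_maxL h v hMv
        refine Or.inr ⟨i, h.length, hi, by simp, ?_, ?_⟩
        · rw [snoc_self, snoc_left h v i hi]; exact hvi
        · rw [snoc_self]
      constructor
      · rintro ⟨hLv, hrest⟩
        have hP' : ¬ P210 (h ++ [v]) := by
          rw [P210_snoc]
          rintro (hp | ⟨i, j, hij, hj, h1, h2⟩)
          · exact hP hp
          · have := hL1 i j hij hj h2
            omega
        have hIH2 := IH (h ++ [v]) v (hL1' hLv) hL2' hP'
        rw [hM', hassoc] at hIH2
        exact hIH2.1 hrest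
      · intro hnp
        have hP' : ¬ P210 (h ++ [v]) := by
          intro hp
          exact hnp (hassoc ▸ P210_mono (h ++ [v]) rest hp)
        have hLv : L ≤ v := by
          by_contra hc
          push_neg at hc
          rcases hL2 with h0 | ⟨i, j, hij, hj, h1, h2⟩
          · omega
          · exact hP' ((P210_snoc h v).2 (Or.inr ⟨i, j, hij, hj, by omega, h1⟩))
        have hIH2 := IH (h ++ [v]) v (hL1' hLv) hL2' hP'
        rw [hM', hassoc] at hIH2
        exact ⟨hLv, hIH2.2 hnp⟩


lemma sorted_getElem!_countP (l : List ℕ) (hl : l.Pairwise (· < ·)) :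
    ∀ v : ℕ, v ∈ l → l[l.countP (fun x => decide (x < v))]! = v := by
  induction l with
  | nil => intro v hv; simp at hv
  | cons a t ih =>
    intro v hv
    have hsc := List.pairwise_cons.1 hl
    rcases List.mem_cons.1 hv with rfl | hvt
    · have h0 : t.countP (fun x => decide (x < v)) = 0 := by
        rw [List.countP_eq_zero]
        intro x hx
        simp only [decide_eq_true_eq]
        exact not_lt.2 (le_of_lt (hsc.1 x hx))
      rw [List.countP_cons]
      simp [h0]
    · have hav : a < v := hsc.1 v hvt
      rw [List.countP_cons]
      simp only [decide_eq_true_eq, hav, if_pos]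
      rw [show t.countP (fun x => decide (x < v)) + 1 =
        (t.countP (fun x => decide (x < v))) + 1 from rfl]
      rw [List.getElem!_cons_succ]
      exact ih hsc.2 v hvt

lemma sorted_countP_getElem! (l : List ℕ) (hl : l.Pairwise (· < ·)) :
    ∀ i : ℕ, i < l.length → l.countP (fun x => decide (x < l[i]!)) = i := by
  induction l with
  | nil => intro i hi; simp at hi
  | cons a t ih =>
    intro i hi
    have hsc := List.pairwise_cons.1 hl
    cases i with
    | zero =>
      simp only [List.getElem!_cons_zero]
      rw [List.countP_cons]
      have h0 : t.countP (fun x => decide (x < a)) = 0 := by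
        rw [List.countP_eq_zero]
        intro x hx
        simp only [decide_eq_true_eq]
        exact not_lt.2 (le_of_lt (hsc.1 x hx))
      simp [h0]
    | succ n =>
      simp only [List.getElem!_cons_succ]
      have hn : n < t.length := by simpa using hi
      have hmem : t[n]! ∈ t := by
        rw [getElem!_pos t n hn]
        exact List.getElem_mem _
      have hat : a < t[n]! := hsc.1 _ hmem
      rw [List.countP_cons]
      simp only [decide_eq_true_eq, hat, if_pos]
      rw [ih hsc.2 n hn]

lemma countP_lt_length (l : List ℕ) (v : ℕ) (hv : v ∈ l) :
    l.countP (fun x => decide (x < v)) < l.length := by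
  rcases lt_or_eq_of_le (List.countP_le_length (l := l) (p := fun x => decide (x < v))) with h | h
  · exact h
  · exfalso
    have := (List.countP_eq_length (p := fun x => decide (x < v)) (l := l)).1 h v hv
    simp at this


lemma card_filter_sort' (s : Finset ℕ) (p : ℕ → Prop) [DecidablePred p] :
    (s.filter p).card = (s.sort (· ≤ ·)).countP (fun x => decide (p x)) := by
  have h1 : (s.filter p).card = (Multiset.countP p s.val : ℕ) := by
    rw [Finset.card_def, Finset.filter_val, Multiset.countP_eq_card_filter]
  rw [h1, ← Finset.sort_eq s (· ≤ ·), Multiset.coe_countP]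

lemma countP_le_eq (l : List ℕ) (hn : l.Nodup) (v : ℕ) (hv : v ∈ l) :
    l.countP (fun x => decide (x ≤ v)) = l.countP (fun x => decide (x < v)) + 1 := by
  induction l with
  | nil => simp at hv
  | cons a t ih =>
    rw [List.countP_cons, List.countP_cons]
    have hna := List.nodup_cons.1 hn
    rcases List.mem_cons.1 hv with rfl | hvt
    · have ht : t.countP (fun x => decide (x ≤ v)) = t.countP (fun x => decide (x < v)) := by
        apply List.countP_congr
        intro x hx
        have hxv : x ≠ v := fun h => hna.1 (h ▸ hx)
        have : (x ≤ v) ↔ (x < v) := by omega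
        simp only [decide_eq_true_eq]
        exact this
      simp [ht]
    · have hav : a ≠ v := fun h => hna.1 (h ▸ hvt)
      rw [ih hna.2 hvt]
      have hd : (decide (a ≤ v)) = (decide (a < v)) := decide_eq_decide.2 (by omega)
      rw [hd]
      cases decide (a < v) <;> simp <;> omega

lemma record_card (M v L : ℕ) (F : Finset ℕ) (hMv : M ≤ v) (hsub : F ⊆ Finset.range M)
    (hLM : L ≤ M) (hcard : (Finset.range M \ F).card = M - L) :
    (Finset.range v \ F).card = v - L := by
  have hun : Finset.range v \ F = (Finset.range M \ F) ∪ Finset.Ico M v := by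
    ext x
    simp only [Finset.mem_sdiff, Finset.mem_range, Finset.mem_union, Finset.mem_Ico]
    constructor
    · rintro ⟨hx, hxF⟩
      by_cases hxM : x < M
      · exact Or.inl ⟨hxM, hxF⟩
      · exact Or.inr ⟨by omega, hx⟩
    · rintro (⟨hx, hxF⟩ | ⟨hx1, hx2⟩)
      · exact ⟨by omega, hxF⟩
      · refine ⟨hx2, fun hxF => ?_⟩
        have := Finset.mem_range.1 (hsub hxF)
        omega
  rw [hun, Finset.card_union_of_disjoint]
  · rw [hcard, Nat.card_Ico]
    omega
  · rw [Finset.disjoint_left]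
    intro x hx hx2
    have := (Finset.mem_sdiff.1 hx).1
    simp only [Finset.mem_range] at this
    simp only [Finset.mem_Ico] at hx2
    omega

lemma card_after (M : ℕ) (F : Finset ℕ) (hsub : F ⊆ Finset.range M) (w : ℕ)
    (hw : w ∈ Finset.range M \ F) :
    (Finset.range M \ (F ∪ Finset.Ico (w + 1) M)).card
      = ((Finset.range M \ F).sort (· ≤ ·)).countP (fun x => decide (x < w)) + 1 := by
  have h1 : Finset.range M \ (F ∪ Finset.Ico (w + 1) M)
      = (Finset.range M \ F).filter (fun x => x ≤ w) := by
    ext x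
    simp only [Finset.mem_sdiff, Finset.mem_union, Finset.mem_Ico, Finset.mem_filter,
      Finset.mem_range, not_or, not_and, not_lt]
    constructor
    · rintro ⟨hx, hxF, hxI⟩
      exact ⟨⟨hx, hxF⟩, by omega⟩
    · rintro ⟨⟨hx, hxF⟩, hxw⟩
      exact ⟨hx, hxF, by omega⟩
  rw [h1, card_filter_sort']
  have hnd := Finset.sort_nodup (Finset.range M \ F) (· ≤ ·)
  have hmem : w ∈ (Finset.range M \ F).sort (· ≤ ·) := (Finset.mem_sort _).2 hw
  exact countP_le_eq _ hnd w hmem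


def phiAux : ℕ → Finset ℕ → List ℕ → List ℕ
  | _, _, [] => []
  | M, F, v :: rest =>
    if M ≤ v then v :: phiAux v F rest
    else (M - 1 - ((Finset.range M \ F).sort (· ≤ ·)).countP (fun x => decide (x < v))) ::
      phiAux M (F ∪ Finset.Ico (v + 1) M) rest

def psiAux : ℕ → Finset ℕ → List ℕ → List ℕ
  | _, _, [] => []
  | M, F, v :: rest =>
    if M ≤ v then v :: psiAux v F rest
    else (((Finset.range M \ F).sort (· ≤ ·))[M - 1 - v]!) ::
      psiAux M (F ∪ Finset.Ico ((((Finset.range M \ F).sort (· ≤ ·))[M - 1 - v]!) + 1) M) rest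

lemma phi_main : ∀ (e : List ℕ) (M L : ℕ) (F : Finset ℕ),
    F ⊆ Finset.range M → L ≤ M → (Finset.range M \ F).card = M - L →
    avoidsB M F e →
    avoidsA M L (phiAux M F e) ∧ psiAux M F (phiAux M F e) = e := by
  intro e
  induction e with
  | nil =>
    intro M L F _ _ _ _
    exact ⟨trivial, rfl⟩
  | cons v rest IH =>
    intro M L F hsub hLM hcard hav
    by_cases hMv : M ≤ v
    · -- record step
      have hsub' : F ⊆ Finset.range v :=
        hsub.trans (Finset.range_subset_range.2 hMv)
      have hcard' := record_card M v L F hMv hsub hLM hcard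
      have hav' : avoidsB v F rest := by
        rw [show avoidsB M F (v :: rest) = if M ≤ v then avoidsB v F rest
          else v ∉ F ∧ avoidsB M (F ∪ Finset.Ico (v + 1) M) rest from rfl, if_pos hMv] at hav
        exact hav
      obtain ⟨h1, h2⟩ := IH v L F hsub' (hLM.trans hMv) hcard' hav'
      rw [show phiAux M F (v :: rest) = v :: phiAux v F rest by
        rw [show phiAux M F (v :: rest) = if M ≤ v then v :: phiAux v F rest
          else _ :: phiAux M (F ∪ Finset.Ico (v + 1) M) rest from rfl, if_pos hMv]]
      constructor
      · rw [show avoidsA M L (v :: phiAux v F rest) = if M ≤ v then avoidsA v L (phiAux v F rest)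
          else L ≤ v ∧ avoidsA M v (phiAux v F rest) from rfl, if_pos hMv]
        exact h1
      · rw [show psiAux M F (v :: phiAux v F rest) = if M ≤ v then v :: psiAux v F (phiAux v F rest)
          else _ from rfl, if_pos hMv, h2]
    · -- low step
      push_neg at hMv
      have hnle : ¬ M ≤ v := not_le.2 hMv
      have hav' : v ∉ F ∧ avoidsB M (F ∪ Finset.Ico (v + 1) M) rest := by
        rw [show avoidsB M F (v :: rest) = if M ≤ v then avoidsB v F rest
          else v ∉ F ∧ avoidsB M (F ∪ Finset.Ico (v + 1) M) rest from rfl, if_neg hnle] at hav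
        exact hav
      obtain ⟨hvF, havrest⟩ := hav'
      set l := (Finset.range M \ F).sort (· ≤ ·) with hl
      set r := l.countP (fun x => decide (x < v)) with hr
      have hvmem : v ∈ Finset.range M \ F :=
        Finset.mem_sdiff.2 ⟨Finset.mem_range.2 hMv, hvF⟩
      have hvl : v ∈ l := (Finset.mem_sort _).2 hvmem
      have hllen : l.length = M - L := by
        rw [hl, Finset.length_sort, hcard]
      have hrlt : r < M - L := by
        rw [← hllen]
        exact countP_lt_length l v hvl
      have hM1 : 1 ≤ M := by omega
      set a := M - 1 - r with ha
      have hLa : L ≤ a := by omega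
      have haM : a < M := by omega
      have hsub' : F ∪ Finset.Ico (v + 1) M ⊆ Finset.range M := by
        intro x hx
        rcases Finset.mem_union.1 hx with hx | hx
        · exact hsub hx
        · simp only [Finset.mem_Ico] at hx
          exact Finset.mem_range.2 hx.2
      have hcard' : (Finset.range M \ (F ∪ Finset.Ico (v + 1) M)).card = M - a := by
        rw [card_after M F hsub v hvmem, ← hl, ← hr]
        omega
      obtain ⟨h1, h2⟩ := IH M a (F ∪ Finset.Ico (v + 1) M) hsub' (le_of_lt haM) hcard' havrest
      rw [show phiAux M F (v :: rest) =
        a :: phiAux M (F ∪ Finset.Ico (v + 1) M) rest by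
        rw [show phiAux M F (v :: rest) = if M ≤ v then v :: phiAux v F rest
          else (M - 1 - l.countP (fun x => decide (x < v))) ::
            phiAux M (F ∪ Finset.Ico (v + 1) M) rest from rfl, if_neg hnle, ← hr, ← ha]]
      have hnlea : ¬ M ≤ a := not_le.2 haM
      constructor
      · rw [show avoidsA M L (a :: phiAux M (F ∪ Finset.Ico (v + 1) M) rest) =
          if M ≤ a then avoidsA a L (phiAux M (F ∪ Finset.Ico (v + 1) M) rest)
          else L ≤ a ∧ avoidsA M a (phiAux M (F ∪ Finset.Ico (v + 1) M) rest) from rfl,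
          if_neg hnlea]
        exact ⟨hLa, h1⟩
      · rw [show psiAux M F (a :: phiAux M (F ∪ Finset.Ico (v + 1) M) rest) =
          if M ≤ a then a :: psiAux a F (phiAux M (F ∪ Finset.Ico (v + 1) M) rest)
          else (l[M - 1 - a]!) ::
            psiAux M (F ∪ Finset.Ico ((l[M - 1 - a]!) + 1) M)
              (phiAux M (F ∪ Finset.Ico (v + 1) M) rest) from rfl, if_neg hnlea]
        have hidx : M - 1 - a = r := by omega
        have hlv : l[M - 1 - a]! = v := by
          rw [hidx, hr]
          exact sorted_getElem!_countP l (Finset.sortedLT_sort _).pairwise v hvl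
        rw [hlv, h2]

lemma psi_main : ∀ (e : List ℕ) (M L : ℕ) (F : Finset ℕ),
    F ⊆ Finset.range M → L ≤ M → (Finset.range M \ F).card = M - L →
    avoidsA M L e →
    avoidsB M F (psiAux M F e) ∧ phiAux M F (psiAux M F e) = e := by
  intro e
  induction e with
  | nil =>
    intro M L F _ _ _ _
    exact ⟨trivial, rfl⟩
  | cons v rest IH =>
    intro M L F hsub hLM hcard hav
    by_cases hMv : M ≤ v
    · -- record step
      have hsub' : F ⊆ Finset.range v := hsub.trans (Finset.range_subset_range.2 hMv)
      have hcard' := record_card M v L F hMv hsub hLM hcard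
      have hav' : avoidsA v L rest := by
        rw [show avoidsA M L (v :: rest) = if M ≤ v then avoidsA v L rest
          else L ≤ v ∧ avoidsA M v rest from rfl, if_pos hMv] at hav
        exact hav
      obtain ⟨h1, h2⟩ := IH v L F hsub' (hLM.trans hMv) hcard' hav'
      rw [show psiAux M F (v :: rest) = v :: psiAux v F rest by
        rw [show psiAux M F (v :: rest) = if M ≤ v then v :: psiAux v F rest
          else _ from rfl, if_pos hMv]]
      constructor
      · rw [show avoidsB M F (v :: psiAux v F rest) = if M ≤ v then avoidsB v F (psiAux v F rest)
          else v ∉ F ∧ avoidsB M (F ∪ Finset.Ico (v + 1) M) (psiAux v F rest) from rfl,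
          if_pos hMv]
        exact h1
      · rw [show phiAux M F (v :: psiAux v F rest) = if M ≤ v then v :: phiAux v F (psiAux v F rest)
          else _ from rfl, if_pos hMv, h2]
    · -- low step
      push_neg at hMv
      have hnle : ¬ M ≤ v := not_le.2 hMv
      have hav' : L ≤ v ∧ avoidsA M v rest := by
        rw [show avoidsA M L (v :: rest) = if M ≤ v then avoidsA v L rest
          else L ≤ v ∧ avoidsA M v rest from rfl, if_neg hnle] at hav
        exact hav
      obtain ⟨hLv, havrest⟩ := hav'
      set l := (Finset.range M \ F).sort (· ≤ ·) with hl
      have hllen : l.length = M - L := by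
        rw [hl, Finset.length_sort, hcard]
      have hM1 : 1 ≤ M := by omega
      set r := M - 1 - v with hrdef
      have hrlen : r < l.length := by
        rw [hllen]; omega
      set w := l[r]! with hw
      have hwl : w ∈ l := by
        rw [hw, getElem!_pos l r hrlen]
        exact List.getElem_mem _
      have hwmem : w ∈ Finset.range M \ F := (Finset.mem_sort _).1 hwl
      have hwM : w < M := Finset.mem_range.1 (Finset.mem_sdiff.1 hwmem).1
      have hwF : w ∉ F := (Finset.mem_sdiff.1 hwmem).2
      have hcountw : l.countP (fun x => decide (x < w)) = r := by
        rw [hw]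
        exact sorted_countP_getElem! l (Finset.sortedLT_sort _).pairwise r hrlen
      have hsub' : F ∪ Finset.Ico (w + 1) M ⊆ Finset.range M := by
        intro x hx
        rcases Finset.mem_union.1 hx with hx | hx
        · exact hsub hx
        · simp only [Finset.mem_Ico] at hx
          exact Finset.mem_range.2 hx.2
      have hcard' : (Finset.range M \ (F ∪ Finset.Ico (w + 1) M)).card = M - v := by
        rw [card_after M F hsub w hwmem, ← hl, hcountw]
        omega
      obtain ⟨h1, h2⟩ := IH M v (F ∪ Finset.Ico (w + 1) M) hsub' (le_of_lt hMv) hcard' havrest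
      rw [show psiAux M F (v :: rest) =
        w :: psiAux M (F ∪ Finset.Ico (w + 1) M) rest by
        rw [show psiAux M F (v :: rest) = if M ≤ v then v :: psiAux v F rest
          else (l[M - 1 - v]!) ::
            psiAux M (F ∪ Finset.Ico ((l[M - 1 - v]!) + 1) M) rest from rfl, if_neg hnle,
          ← hrdef, ← hw]]
      have hnlew : ¬ M ≤ w := not_le.2 hwM
      constructor
      · rw [show avoidsB M F (w :: psiAux M (F ∪ Finset.Ico (w + 1) M) rest) =
          if M ≤ w then avoidsB w F (psiAux M (F ∪ Finset.Ico (w + 1) M) rest)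
          else w ∉ F ∧ avoidsB M (F ∪ Finset.Ico (w + 1) M)
            (psiAux M (F ∪ Finset.Ico (w + 1) M) rest) from rfl, if_neg hnlew]
        exact ⟨hwF, h1⟩
      · rw [show phiAux M F (w :: psiAux M (F ∪ Finset.Ico (w + 1) M) rest) =
          if M ≤ w then w :: phiAux w F (psiAux M (F ∪ Finset.Ico (w + 1) M) rest)
          else (M - 1 - l.countP (fun x => decide (x < w))) ::
            phiAux M (F ∪ Finset.Ico (w + 1) M)
              (psiAux M (F ∪ Finset.Ico (w + 1) M) rest) from rfl, if_neg hnlew]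
        rw [hcountw, h2]
        congr 1
        omega


lemma phi_valid : ∀ (e s : List ℕ) (M : ℕ) (F : Finset ℕ),
    s.Pairwise (· < ·) → (∀ b ∈ s, M ≤ b) → List.Forall₂ (· < ·) e s →
    List.Forall₂ (· < ·) (phiAux M F e) s := by
  intro e
  induction e with
  | nil =>
    intro s M F _ _ hf
    cases hf
    exact List.Forall₂.nil
  | cons v rest IH =>
    intro s M F hs hM hf
    cases hf with
    | cons hvb hrest =>
      rename_i b s'
      have hsc := List.pairwise_cons.1 hs
      by_cases hMv : M ≤ v
      · rw [show phiAux M F (v :: rest) = v :: phiAux v F rest by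
          rw [show phiAux M F (v :: rest) = if M ≤ v then v :: phiAux v F rest
            else _ from rfl, if_pos hMv]]
        exact List.Forall₂.cons hvb
          (IH s' v F hsc.2 (fun b' hb' => le_of_lt (lt_of_lt_of_le hvb (le_of_lt (hsc.1 b' hb')))) hrest)
      · push_neg at hMv
        have hMb : M ≤ b := hM b (List.mem_cons_self)
        rw [show phiAux M F (v :: rest) =
          (M - 1 - ((Finset.range M \ F).sort (· ≤ ·)).countP (fun x => decide (x < v))) ::
            phiAux M (F ∪ Finset.Ico (v + 1) M) rest by
          rw [show phiAux M F (v :: rest) = if M ≤ v then v :: phiAux v F rest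
            else _ :: phiAux M (F ∪ Finset.Ico (v + 1) M) rest from rfl, if_neg (not_le.2 hMv)]]
        refine List.Forall₂.cons (by omega) ?_
        exact IH s' M _ hsc.2 (fun b' hb' => le_of_lt (lt_of_le_of_lt hMb (hsc.1 b' hb'))) hrest

lemma psi_valid : ∀ (e s : List ℕ) (M : ℕ) (F : Finset ℕ),
    s.Pairwise (· < ·) → (∀ b ∈ s, M ≤ b) → List.Forall₂ (· < ·) e s →
    List.Forall₂ (· < ·) (psiAux M F e) s := by
  intro e
  induction e with
  | nil =>
    intro s M F _ _ hf
    cases hf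
    exact List.Forall₂.nil
  | cons v rest IH =>
    intro s M F hs hM hf
    cases hf with
    | cons hvb hrest =>
      rename_i b s'
      have hsc := List.pairwise_cons.1 hs
      by_cases hMv : M ≤ v
      · rw [show psiAux M F (v :: rest) = v :: psiAux v F rest by
          rw [show psiAux M F (v :: rest) = if M ≤ v then v :: psiAux v F rest
            else _ from rfl, if_pos hMv]]
        exact List.Forall₂.cons hvb
          (IH s' v F hsc.2 (fun b' hb' => le_of_lt (lt_of_lt_of_le hvb (le_of_lt (hsc.1 b' hb')))) hrest)
      · push_neg at hMv
        have hMb : M ≤ b := hM b (List.mem_cons_self)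
        set l := (Finset.range M \ F).sort (· ≤ ·) with hl
        have hwM : l[M - 1 - v]! < M := by
          by_cases hr : M - 1 - v < l.length
          · have : l[M - 1 - v]! ∈ l := by
              rw [getElem!_pos l _ hr]
              exact List.getElem_mem _
            have := (Finset.mem_sort (α := ℕ) (· ≤ ·)).1 this
            exact Finset.mem_range.1 (Finset.mem_sdiff.1 this).1
          · rw [getElem!_neg l _ (by omega)]
            show (default : ℕ) < M
            exact Nat.zero_lt_of_lt hMv
        rw [show psiAux M F (v :: rest) =
          (l[M - 1 - v]!) :: psiAux M (F ∪ Finset.Ico ((l[M - 1 - v]!) + 1) M) rest by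
          rw [show psiAux M F (v :: rest) = if M ≤ v then v :: psiAux v F rest
            else (l[M - 1 - v]!) ::
              psiAux M (F ∪ Finset.Ico ((l[M - 1 - v]!) + 1) M) rest from rfl,
            if_neg (not_le.2 hMv)]]
        refine List.Forall₂.cons (by omega) ?_
        exact IH s' M _ hsc.2 (fun b' hb' => le_of_lt (lt_of_le_of_lt hMb (hsc.1 b' hb'))) hrest

lemma valid_iff : ∀ (s e : List ℕ),
    (e.length = s.length ∧ ∀ i : ℕ, i < s.length → e[i]! < s[i]!) ↔
      List.Forall₂ (· < ·) e s := by
  intro s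
  induction s with
  | nil =>
    intro e
    constructor
    · rintro ⟨h1, _⟩
      rw [List.length_eq_zero_iff.1 h1]
      exact List.Forall₂.nil
    · intro h
      cases h
      exact ⟨rfl, by simp⟩
  | cons b s' IH =>
    intro e
    constructor
    · rintro ⟨h1, h2⟩
      cases e with
      | nil => simp at h1
      | cons a e' =>
        refine List.Forall₂.cons ?_ ((IH e').1 ⟨by simpa using h1, ?_⟩)
        · have := h2 0 (by simp)
          simpa using this
        · intro i hi
          have := h2 (i + 1) (by simpa using hi)
          simpa using this
    · intro h
      cases h with
      | cons hab hrest =>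
        rename_i a e'
        obtain ⟨g1, g2⟩ := (IH e').2 hrest
        refine ⟨by simpa using g1, ?_⟩
        intro i hi
        cases i with
        | zero => simpa using hab
        | succ n =>
          simp only [List.getElem!_cons_succ]
          exact g2 n (by simpa using hi)



end WilfB

/-- Theorem: `|I_S(210)| = |I_S(201)|` for any finite set `S` of positive integers. -/
theorem stmt_1 (S : Finset ℕ) (hS : ∀ x ∈ S, 0 < x) :
    (SInvAvoid S [2, 1, 0]).ncard = (SInvAvoid S [2, 0, 1]).ncard := by
  classical
  have hsorted : (S.sort (· ≤ ·)).Pairwise (· < ·) := (Finset.sortedLT_sort S).pairwise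
  have hslen : (S.sort (· ≤ ·)).length = S.card := Finset.length_sort _
  have hF0 : ∀ x : ℕ, x ∈ (∅ : Finset ℕ) ↔
      ∃ i j, i < j ∧ j < ([] : List ℕ).length ∧ ([] : List ℕ)[j]! < x ∧ x < ([] : List ℕ)[i]! := by
    simp
  have hP2010 : ¬ WilfB.P201 [] := by
    rintro ⟨i, j, k, _, _, hk, _⟩
    simp at hk
  have hP2100 : ¬ WilfB.P210 [] := by
    rintro ⟨i, j, k, _, _, hk, _⟩
    simp at hk
  have hB : ∀ e : List ℕ, AvoidsPat e [2, 0, 1] ↔ WilfB.avoidsB 0 ∅ e := by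
    intro e
    have h1 := WilfB.scanB_iff e [] ∅ hF0 hP2010
    rw [show WilfB.maxL [] = 0 from rfl, List.nil_append] at h1
    rw [AvoidsPat, WilfB.contains_201_iff]
    exact h1.symm
  have hA : ∀ e : List ℕ, AvoidsPat e [2, 1, 0] ↔ WilfB.avoidsA 0 0 e := by
    intro e
    have h1 := WilfB.scanA_iff e [] 0 (by simp) (Or.inl rfl) hP2100
    rw [show WilfB.maxL [] = 0 from rfl, List.nil_append] at h1
    rw [AvoidsPat, WilfB.contains_210_iff]
    exact h1.symm
  have hmemV : ∀ e : List ℕ, e ∈ SInvSeq S ↔ List.Forall₂ (· < ·) e (S.sort (· ≤ ·)) := by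
    intro e
    rw [show (e ∈ SInvSeq S) = (e.length = S.card ∧
      ∀ i : ℕ, i < S.card → e[i]! < (S.sort (· ≤ ·))[i]!) from rfl]
    rw [← hslen]
    exact WilfB.valid_iff (S.sort (· ≤ ·)) e
  have hmem201 : ∀ e : List ℕ, e ∈ SInvAvoid S [2, 0, 1] ↔
      (List.Forall₂ (· < ·) e (S.sort (· ≤ ·)) ∧ WilfB.avoidsB 0 ∅ e) := by
    intro e
    rw [show (e ∈ SInvAvoid S [2, 0, 1]) = (e ∈ SInvSeq S ∧ AvoidsPat e [2, 0, 1]) from rfl]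
    rw [hmemV e, hB e]
  have hmem210 : ∀ e : List ℕ, e ∈ SInvAvoid S [2, 1, 0] ↔
      (List.Forall₂ (· < ·) e (S.sort (· ≤ ·)) ∧ WilfB.avoidsA 0 0 e) := by
    intro e
    rw [show (e ∈ SInvAvoid S [2, 1, 0]) = (e ∈ SInvSeq S ∧ AvoidsPat e [2, 1, 0]) from rfl]
    rw [hmemV e, hA e]
  have hinv0 : (∅ : Finset ℕ) ⊆ Finset.range 0 := by simp
  have hcard0 : (Finset.range 0 \ (∅ : Finset ℕ)).card = 0 - 0 := by simp
  have hbound0 : ∀ b ∈ S.sort (· ≤ ·), 0 ≤ b := fun b _ => Nat.zero_le b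
  have hmapsΦ : Set.MapsTo (WilfB.phiAux 0 ∅) (SInvAvoid S [2, 0, 1]) (SInvAvoid S [2, 1, 0]) := by
    intro e he
    obtain ⟨hv, hb⟩ := (hmem201 e).1 he
    obtain ⟨h1, _⟩ := WilfB.phi_main e 0 0 ∅ hinv0 le_rfl hcard0 hb
    exact (hmem210 _).2 ⟨WilfB.phi_valid e _ 0 ∅ hsorted hbound0 hv, h1⟩
  have hmapsΨ : Set.MapsTo (WilfB.psiAux 0 ∅) (SInvAvoid S [2, 1, 0]) (SInvAvoid S [2, 0, 1]) := by
    intro e he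
    obtain ⟨hv, ha⟩ := (hmem210 e).1 he
    obtain ⟨h1, _⟩ := WilfB.psi_main e 0 0 ∅ hinv0 le_rfl hcard0 ha
    exact (hmem201 _).2 ⟨WilfB.psi_valid e _ 0 ∅ hsorted hbound0 hv, h1⟩
  have hbij : Set.BijOn (WilfB.phiAux 0 ∅) (SInvAvoid S [2, 0, 1]) (SInvAvoid S [2, 1, 0]) := by
    refine Set.InvOn.bijOn ⟨?_, ?_⟩ hmapsΦ hmapsΨ
    · intro e he
      obtain ⟨hv, hb⟩ := (hmem201 e).1 he
      exact (WilfB.phi_main e 0 0 ∅ hinv0 le_rfl hcard0 hb).2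
    · intro e he
      obtain ⟨hv, ha⟩ := (hmem210 e).1 he
      exact (WilfB.psi_main e 0 0 ∅ hinv0 le_rfl hcard0 ha).2
  have h1 := Set.ncard_image_of_injOn hbij.injOn
  rw [hbij.image_eq] at h1
  exact h1
end

section
/- Let π = π_1⋯π_ℓ be a pattern of length ℓ ≥ 2 with π_i ∈ {0,1} for all i and with exactly one index j such that π_j = 0. Then for any integers j, k ≥ 0, the number of binary words of length j + k with exactly j zeros and k ones that avoid π equals the binomial coefficient C(j + min{k, ℓ−2}, j). -/
namespace Stmt3Aux

/-- The pattern `1^a 0 1^b`. -/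
def pat (a b : ℕ) : List ℕ := List.replicate a 1 ++ 0 :: List.replicate b 1

lemma pat_length (a b : ℕ) : (pat a b).length = a + b + 1 := by
  simp [pat]; omega

lemma pat_succ (a b : ℕ) : pat (a+1) b = 1 :: pat a b := by
  simp [pat, List.replicate_succ]

lemma pat_zero (b : ℕ) : pat 0 b = 0 :: List.replicate b 1 := by
  simp [pat]

lemma pat_count_one (a b : ℕ) : (pat a b).count 1 = a + b := by
  simp [pat, List.count_append, List.count_cons, List.count_replicate]

lemma pat_count_zero (a b : ℕ) : (pat a b).count 0 = 1 := by
  simp [pat, List.count_append, List.count_cons, List.count_replicate]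

lemma pat_getElem (a b : ℕ) (i : ℕ) (h : i < (pat a b).length) :
    (pat a b)[i] = if i = a then 0 else 1 := by
  rw [pat_length] at h
  simp only [pat]
  rcases Nat.lt_trichotomy i a with hi | rfl | hi
  · have h1 : i < (List.replicate a (1:ℕ)).length := by simpa using hi
    rw [List.getElem_append_left h1, List.getElem_replicate]
    simp [Nat.ne_of_lt hi]
  · have h1 : (List.replicate i (1:ℕ)).length ≤ i := by simp
    rw [List.getElem_append_right h1]
    simp
  · have h1 : (List.replicate a (1:ℕ)).length ≤ i := by simp; omega
    rw [List.getElem_append_right h1]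
    obtain ⟨m, hm⟩ : ∃ m, i - a = m + 1 := ⟨i - a - 1, by simp at h1; omega⟩
    simp only [List.length_replicate]
    simp only [hm, List.getElem_cons_succ, List.getElem_replicate]
    simp [Nat.ne_of_gt hi]

/-- Binary words of length `n`. -/
def BW : ℕ → Finset (List ℕ)
  | 0 => {([] : List ℕ)}
  | n+1 => (BW n).image (List.cons 0) ∪ (BW n).image (List.cons 1)

lemma mem_BW {n : ℕ} {w : List ℕ} :
    w ∈ BW n ↔ w.length = n ∧ ∀ x ∈ w, x = 0 ∨ x = 1 := by
  induction n generalizing w with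
  | zero =>
    simp only [BW, Finset.mem_singleton]
    constructor
    · rintro rfl; simp
    · rintro ⟨h, _⟩; exact List.length_eq_zero_iff.mp h
  | succ n ih =>
    simp only [BW, Finset.mem_union, Finset.mem_image]
    constructor
    · rintro (⟨t, ht, rfl⟩ | ⟨t, ht, rfl⟩) <;>
      · obtain ⟨hl, hb⟩ := ih.mp ht
        refine ⟨by simp [hl], ?_⟩
        intro x hx
        rcases List.mem_cons.mp hx with rfl | hx
        · simp
        · exact hb x hx
    · rintro ⟨hl, hb⟩
      rcases w with _ | ⟨x, t⟩
      · simp only [List.length_nil] at hl; omega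
      · have hb' : ∀ x ∈ t, x = 0 ∨ x = 1 := fun y hy => hb y (List.mem_cons_of_mem _ hy)
        have ht : t ∈ BW n := ih.mpr ⟨by simpa using hl, hb'⟩
        rcases hb x (List.mem_cons_self) with rfl | rfl
        · exact Or.inl ⟨t, ht, rfl⟩
        · exact Or.inr ⟨t, ht, rfl⟩

/-- Binary words with `j` zeros and `k` ones avoiding the pattern `1^a 0 1^b`. -/
def AV (a b j k : ℕ) : Finset (List ℕ) :=
  (BW (j+k)).filter (fun w => w.count 0 = j ∧ w.count 1 = k ∧ ¬ (pat a b).Sublist w)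

lemma mem_AV {a b j k : ℕ} {w : List ℕ} : w ∈ AV a b j k ↔
    w.length = j + k ∧ (∀ x ∈ w, x = 0 ∨ x = 1) ∧ w.count 0 = j ∧ w.count 1 = k ∧
      ¬ (pat a b).Sublist w := by
  simp only [AV, Finset.mem_filter, mem_BW]
  tauto

lemma pat_sublist_cons1 (a b : ℕ) (t : List ℕ) :
    (pat (a+1) b).Sublist (1 :: t) ↔ (pat a b).Sublist t := by
  rw [pat_succ, List.cons_sublist_cons]

lemma pat_sublist_cons0 (a b : ℕ) (t : List ℕ) :
    (pat (a+1) b).Sublist (0 :: t) ↔ (pat (a+1) b).Sublist t := by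
  rw [List.sublist_cons_iff]
  constructor
  · rintro (h | ⟨r, hr, _⟩)
    · exact h
    · rw [pat_succ] at hr; simp at hr
  · exact Or.inl

lemma pat0_sublist_cons1 (b : ℕ) (t : List ℕ) :
    (pat 0 b).Sublist (1 :: t) ↔ (pat 0 b).Sublist t := by
  rw [List.sublist_cons_iff]
  constructor
  · rintro (h | ⟨r, hr, _⟩)
    · exact h
    · rw [pat_zero] at hr; simp at hr
  · exact Or.inl

lemma pat0_sublist_cons0 (b : ℕ) (t : List ℕ) :
    (pat 0 b).Sublist (0 :: t) ↔ (List.replicate b 1).Sublist t ∨ (pat 0 b).Sublist t := by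
  rw [List.sublist_cons_iff]
  constructor
  · rintro (h | ⟨r, hr, hrt⟩)
    · exact Or.inr h
    · rw [pat_zero] at hr
      simp only [List.cons.injEq] at hr
      exact Or.inl (hr.2 ▸ hrt)
  · rintro (h | h)
    · exact Or.inr ⟨List.replicate b 1, pat_zero b, h⟩
    · exact Or.inl h

lemma AV_k0 (a b j : ℕ) (hab : 1 ≤ a + b) : AV a b j 0 = {List.replicate j 0} := by
  ext w
  simp only [mem_AV, Finset.mem_singleton]
  constructor
  · rintro ⟨hl, hb, h0, h1, _⟩
    rw [List.eq_replicate_iff]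
    refine ⟨by omega, fun x hx => ?_⟩
    rcases hb x hx with rfl | rfl
    · rfl
    · have : 0 < w.count 1 := List.count_pos_iff.mpr hx
      omega
  · rintro rfl
    refine ⟨by simp, ?_, by simp, by simp [List.count_replicate], fun hs => ?_⟩
    · intro x hx; left; exact List.eq_of_mem_replicate hx
    · have := hs.count_le 1
      rw [pat_count_one] at this
      simp [List.count_replicate] at this
      omega

lemma AV_j0 (a b k : ℕ) : AV a b 0 k = {List.replicate k 1} := by
  ext w
  simp only [mem_AV, Finset.mem_singleton]
  constructor
  · rintro ⟨hl, hb, h0, h1, _⟩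
    rw [List.eq_replicate_iff]
    refine ⟨by omega, fun x hx => ?_⟩
    rcases hb x hx with rfl | rfl
    · have : 0 < w.count 0 := List.count_pos_iff.mpr hx
      omega
    · rfl
  · rintro rfl
    refine ⟨by simp, ?_, by simp [List.count_replicate], by simp, fun hs => ?_⟩
    · intro x hx; right; exact List.eq_of_mem_replicate hx
    · have := hs.count_le 0
      rw [pat_count_zero] at this
      simp [List.count_replicate] at this

lemma AV00 (j k : ℕ) (hj : 1 ≤ j) : AV 0 0 j k = ∅ := by
  ext w
  simp only [mem_AV, Finset.notMem_empty, iff_false]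
  rintro ⟨hl, hb, h0, h1, hav⟩
  apply hav
  rw [pat_zero]
  simp only [List.replicate_zero]
  rw [List.singleton_sublist]
  have : 0 < w.count 0 := by omega
  exact List.count_pos_iff.mp this

lemma AV_split_pos (a b j k : ℕ) :
    AV (a+1) b (j+1) (k+1)
      = (AV (a+1) b j (k+1)).image (List.cons 0) ∪ (AV a b (j+1) k).image (List.cons 1) := by
  ext w
  simp only [Finset.mem_union, Finset.mem_image, mem_AV]
  constructor
  · rintro ⟨hl, hb, h0, h1, hav⟩
    rcases w with _ | ⟨x, t⟩
    · simp only [List.length_nil] at hl; omega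
    · have hb' : ∀ y ∈ t, y = 0 ∨ y = 1 := fun y hy => hb y (List.mem_cons_of_mem _ hy)
      rcases hb x (List.mem_cons_self) with rfl | rfl
      · refine Or.inl ⟨t, ⟨?_, hb', ?_, ?_, fun hs => hav ((pat_sublist_cons0 a b t).mpr hs)⟩, rfl⟩
        · simp at hl; omega
        · simp [List.count_cons] at h0; omega
        · simpa [List.count_cons] using h1
      · refine Or.inr ⟨t, ⟨?_, hb', ?_, ?_, fun hs => hav ((pat_sublist_cons1 a b t).mpr hs)⟩, rfl⟩
        · simp at hl; omega
        · simpa [List.count_cons] using h0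
        · simp [List.count_cons] at h1; omega
  · rintro (⟨t, ⟨hl, hb, h0, h1, hav⟩, rfl⟩ | ⟨t, ⟨hl, hb, h0, h1, hav⟩, rfl⟩)
    · refine ⟨by simp; omega, ?_, by simp [List.count_cons]; omega, by simp [List.count_cons, h1],
        fun hs => hav ((pat_sublist_cons0 a b t).mp hs)⟩
      intro y hy
      rcases List.mem_cons.mp hy with rfl | hy
      · left; rfl
      · exact hb y hy
    · refine ⟨by simp; omega, ?_, by simp [List.count_cons, h0], by simp [List.count_cons]; omega,
        fun hs => hav ((pat_sublist_cons1 a b t).mp hs)⟩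
      intro y hy
      rcases List.mem_cons.mp hy with rfl | hy
      · right; rfl
      · exact hb y hy

lemma AV_split_zero_lt (b j k : ℕ) (hk : k + 1 < b) :
    AV 0 b (j+1) (k+1)
      = (AV 0 b j (k+1)).image (List.cons 0) ∪ (AV 0 b (j+1) k).image (List.cons 1) := by
  ext w
  simp only [Finset.mem_union, Finset.mem_image, mem_AV]
  constructor
  · rintro ⟨hl, hb, h0, h1, hav⟩
    rcases w with _ | ⟨x, t⟩
    · simp only [List.length_nil] at hl; omega
    · have hb' : ∀ y ∈ t, y = 0 ∨ y = 1 := fun y hy => hb y (List.mem_cons_of_mem _ hy)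
      rcases hb x (List.mem_cons_self) with rfl | rfl
      · refine Or.inl ⟨t, ⟨?_, hb', ?_, ?_,
          fun hs => hav ((pat0_sublist_cons0 b t).mpr (Or.inr hs))⟩, rfl⟩
        · simp at hl; omega
        · simp [List.count_cons] at h0; omega
        · simpa [List.count_cons] using h1
      · refine Or.inr ⟨t, ⟨?_, hb', ?_, ?_, fun hs => hav ((pat0_sublist_cons1 b t).mpr hs)⟩, rfl⟩
        · simp at hl; omega
        · simpa [List.count_cons] using h0
        · simp [List.count_cons] at h1; omega
  · rintro (⟨t, ⟨hl, hb, h0, h1, hav⟩, rfl⟩ | ⟨t, ⟨hl, hb, h0, h1, hav⟩, rfl⟩)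
    · refine ⟨by simp; omega, ?_, by simp [List.count_cons]; omega, by simp [List.count_cons, h1],
        fun hs => ?_⟩
      · intro y hy
        rcases List.mem_cons.mp hy with rfl | hy
        · left; rfl
        · exact hb y hy
      · rcases (pat0_sublist_cons0 b t).mp hs with h | h
        · have := h.count_le 1
          simp [List.count_replicate] at this
          omega
        · exact hav h
    · refine ⟨by simp; omega, ?_, by simp [List.count_cons, h0], by simp [List.count_cons]; omega,
        fun hs => hav ((pat0_sublist_cons1 b t).mp hs)⟩
      intro y hy
      rcases List.mem_cons.mp hy with rfl | hy
      · right; rfl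
      · exact hb y hy

lemma AV_split_zero_ge (b j k : ℕ) (hk : b ≤ k + 1) :
    AV 0 b (j+1) (k+1) = (AV 0 b (j+1) k).image (List.cons 1) := by
  ext w
  simp only [Finset.mem_image, mem_AV]
  constructor
  · rintro ⟨hl, hb, h0, h1, hav⟩
    rcases w with _ | ⟨x, t⟩
    · simp only [List.length_nil] at hl; omega
    · have hb' : ∀ y ∈ t, y = 0 ∨ y = 1 := fun y hy => hb y (List.mem_cons_of_mem _ hy)
      rcases hb x (List.mem_cons_self) with rfl | rfl
      · exfalso
        apply hav
        rw [pat0_sublist_cons0]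
        left
        rw [List.replicate_sublist_iff]
        have : t.count 1 = k + 1 := by simpa [List.count_cons] using h1
        omega
      · refine ⟨t, ⟨?_, hb', ?_, ?_, fun hs => hav ((pat0_sublist_cons1 b t).mpr hs)⟩, rfl⟩
        · simp at hl; omega
        · simpa [List.count_cons] using h0
        · simp [List.count_cons] at h1; omega
  · rintro ⟨t, ⟨hl, hb, h0, h1, hav⟩, rfl⟩
    refine ⟨by simp; omega, ?_, by simp [List.count_cons, h0], by simp [List.count_cons]; omega,
      fun hs => hav ((pat0_sublist_cons1 b t).mp hs)⟩
    intro y hy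
    rcases List.mem_cons.mp hy with rfl | hy
    · right; rfl
    · exact hb y hy

lemma cons_injective (x : ℕ) : Function.Injective (List.cons x) := by
  intro s t h
  injection h

lemma disj_images (s t : Finset (List ℕ)) :
    Disjoint (s.image (List.cons 0)) (t.image (List.cons 1)) := by
  rw [Finset.disjoint_left]
  rintro w hw0 hw1
  simp only [Finset.mem_image] at hw0 hw1
  obtain ⟨u, _, hu⟩ := hw0
  obtain ⟨v, _, hv⟩ := hw1
  rw [← hv] at hu
  injection hu with h _
  exact absurd h (by norm_num)

lemma AV_card : ∀ n a b j k : ℕ, j + k = n → 1 ≤ a + b →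
    (AV a b j k).card = (j + min k (a + b - 1)).choose j := by
  intro n
  induction n using Nat.strong_induction_on with
  | _ n ih =>
    intro a b j k hn hab
    match j, k with
    | j, 0 =>
      rw [AV_k0 _ _ _ hab]
      simp
    | 0, k+1 =>
      rw [AV_j0]
      simp
    | j+1, k+1 =>
      match a with
      | a+1 =>
        rw [AV_split_pos, Finset.card_union_of_disjoint (disj_images _ _),
          Finset.card_image_of_injective _ (cons_injective 0),
          Finset.card_image_of_injective _ (cons_injective 1)]
        have h1 : (AV (a+1) b j (k+1)).card = (j + min (k+1) (a+1+b-1)).choose j :=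
          ih (j + (k+1)) (by omega) _ _ _ _ rfl (by omega)
        rcases Nat.eq_zero_or_pos (a + b) with hab0 | hab1
        · have ha0 : a = 0 := by omega
          have hb0 : b = 0 := by omega
          subst ha0; subst hb0
          rw [AV00 _ _ (by omega), h1]
          simp
        · have h2 : (AV a b (j+1) k).card = (j+1 + min k (a+b-1)).choose (j+1) :=
          ih (j+1 + k) (by omega) _ _ _ _ rfl (by omega)
          rw [h1, h2]
          have e1 : j + 1 + min (k+1) (a+1+b-1) = (j + min (k+1) (a+1+b-1)) + 1 := by omega
          have e2 : j + 1 + min k (a+b-1) = j + min (k+1) (a+1+b-1) := by omega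
          rw [e1, e2, Nat.choose_succ_succ]
      | 0 =>
        by_cases hk : k + 1 < b
        · rw [AV_split_zero_lt _ _ _ hk, Finset.card_union_of_disjoint (disj_images _ _),
            Finset.card_image_of_injective _ (cons_injective 0),
            Finset.card_image_of_injective _ (cons_injective 1)]
          have h1 : (AV 0 b j (k+1)).card = (j + min (k+1) (0+b-1)).choose j :=
            ih (j + (k+1)) (by omega) _ _ _ _ rfl (by omega)
          have h2 : (AV 0 b (j+1) k).card = (j+1 + min k (0+b-1)).choose (j+1) :=
            ih (j+1 + k) (by omega) _ _ _ _ rfl (by omega)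
          rw [h1, h2]
          have e1 : j + 1 + min (k+1) (0+b-1) = (j + min (k+1) (0+b-1)) + 1 := by omega
          have e2 : j + 1 + min k (0+b-1) = j + min (k+1) (0+b-1) := by omega
          rw [e1, e2, Nat.choose_succ_succ]
        · rw [AV_split_zero_ge _ _ _ (by omega),
            Finset.card_image_of_injective _ (cons_injective 1)]
          have h2 : (AV 0 b (j+1) k).card = (j+1 + min k (0+b-1)).choose (j+1) :=
            ih (j+1 + k) (by omega) _ _ _ _ rfl (by omega)
          rw [h2]
          have e : j + 1 + min k (0+b-1) = j + 1 + min (k+1) (0+b-1) := by omega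
          rw [e]

lemma pat_getElem! (a b : ℕ) (i : ℕ) (h : i < (pat a b).length) :
    (pat a b)[i]! = if i = a then 0 else 1 := by
  rw [getElem!_pos (pat a b) i h, pat_getElem]

lemma contains_iff (a b : ℕ) (hab : 1 ≤ a + b) (w : List ℕ)
    (hw : ∀ x ∈ w, x = 0 ∨ x = 1) :
    ContainsPat w (pat a b) ↔ (pat a b).Sublist w := by
  constructor
  · rintro ⟨s, hs, hlen, hiso⟩
    have hsb : ∀ x ∈ s, x = 0 ∨ x = 1 := fun x hx => hw x (hs.subset hx)
    have hval : ∀ i, i < s.length → s[i]! = 0 ∨ s[i]! = 1 := fun i hi => by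
      rw [getElem!_pos s i hi]; exact hsb _ (List.getElem_mem _)
    obtain ⟨i1, hi1len, hi1ne⟩ : ∃ i1, i1 < s.length ∧ i1 ≠ a := by
      rcases Nat.eq_zero_or_pos a with rfl | ha
      · exact ⟨1, by rw [hlen, pat_length]; omega, by omega⟩
      · exact ⟨0, by rw [hlen, pat_length]; omega, by omega⟩
    have halen : a < s.length := by rw [hlen, pat_length]; omega
    have key : ∀ i, i < s.length → (pat a b)[i]! = if i = a then 0 else 1 := fun i hi => by
      rw [hlen] at hi
      exact pat_getElem! a b i hi
    have h01 : s[a]! < s[i1]! := by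
      have h := (hiso a i1 halen hi1len).1
      rw [key a halen, key i1 hi1len] at h
      simp only [if_pos rfl, if_neg hi1ne] at h
      exact h.mpr (by norm_num)
    have hsa : s[a]! = 0 := by
      have h1 := hval a halen
      have h2 := hval i1 hi1len
      omega
    have hall : ∀ i, i < s.length → i ≠ a → s[i]! = 1 := by
      intro i hi hne
      have h := (hiso i i1 hi hi1len).2
      rw [key i hi, key i1 hi1len] at h
      simp only [if_neg hne, if_neg hi1ne] at h
      have h2 := hval i1 hi1len
      have h3 : s[i]! = s[i1]! := h.mpr trivial
      omega
    have hsp : s = pat a b := by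
      apply List.ext_getElem hlen
      intro n h₁ h₂
      rw [pat_getElem a b n h₂]
      by_cases hn : n = a
      · subst hn
        rw [if_pos rfl, ← getElem!_pos s n h₁]
        exact hsa
      · rw [if_neg hn, ← getElem!_pos s n h₁]
        exact hall n h₁ hn
    exact hsp ▸ hs
  · intro h
    exact ⟨pat a b, h, rfl, fun i j _ _ => ⟨Iff.rfl, Iff.rfl⟩⟩

end Stmt3Aux

/-- Theorem: if `p` is a pattern of length `ℓ ≥ 2` with all entries in `{0,1}` and exactly
one entry equal to `0`, then the number of binary words with `j` zeros and `k` ones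
avoiding `p` is `C(j + min{k, ℓ-2}, j)`. -/
theorem stmt_3 (p : List ℕ) (hlen : 2 ≤ p.length)
    (hbin : ∀ x ∈ p, x = 0 ∨ x = 1)
    (hzero : ∃! i : ℕ, i < p.length ∧ p[i]! = 0)
    (j k : ℕ) :
    {w : List ℕ | (∀ x ∈ w, x = 0 ∨ x = 1) ∧ w.length = j + k ∧
      w.count 0 = j ∧ w.count 1 = k ∧ AvoidsPat w p}.ncard =
      (j + min k (p.length - 2)).choose j := by
  obtain ⟨i0, ⟨hi0lt, hi0⟩, huniq⟩ := hzero
  have hkey : ∀ n (h : n < p.length), p[n] = if n = i0 then 0 else 1 := by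
    intro n h
    by_cases hn : n = i0
    · subst hn
      rw [if_pos rfl, ← getElem!_pos p n h]
      exact hi0
    · rw [if_neg hn]
      rcases hbin p[n] (List.getElem_mem _) with h0 | h1
      · exact absurd (huniq n ⟨h, by rw [getElem!_pos p n h]; exact h0⟩) hn
      · exact h1
  have hp : p = Stmt3Aux.pat i0 (p.length - 1 - i0) := by
    apply List.ext_getElem
    · rw [Stmt3Aux.pat_length]; omega
    · intro n h₁ h₂
      rw [hkey n h₁, Stmt3Aux.pat_getElem]
  have hab : 1 ≤ i0 + (p.length - 1 - i0) := by omega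
  have hset : {w : List ℕ | (∀ x ∈ w, x = 0 ∨ x = 1) ∧ w.length = j + k ∧
      w.count 0 = j ∧ w.count 1 = k ∧ AvoidsPat w p}
        = ↑(Stmt3Aux.AV i0 (p.length - 1 - i0) j k) := by
    ext w
    simp only [Set.mem_setOf_eq, Finset.mem_coe, Stmt3Aux.mem_AV]
    constructor
    · rintro ⟨hb, hl, h0, h1, hav⟩
      refine ⟨hl, hb, h0, h1, fun hs => hav ?_⟩
      rw [hp]
      exact (Stmt3Aux.contains_iff _ _ hab w hb).mpr hs
    · rintro ⟨hl, hb, h0, h1, hav⟩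
      refine ⟨hb, hl, h0, h1, fun hc => hav ?_⟩
      rw [hp] at hc
      exact (Stmt3Aux.contains_iff _ _ hab w hb).mp hc
  have hmin : p.length - 2 = i0 + (p.length - 1 - i0) - 1 := by omega
  rw [hset, Set.ncard_coe_finset, Stmt3Aux.AV_card (j+k) _ _ _ _ rfl hab, hmin]
end

section
/- For any finite set S of positive integers, the numbers of S-inversion sequences avoiding the patterns 1011, 1101, and 1110 are all equal; i.e. |I_S(1011)| = |I_S(1101)| = |I_S(1110)|. -/
open List

/-! ### Occurrence predicates -/

/-- numeric pattern with big value `b` and small value `x` -/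
def numpat (b x : ℕ) (p : List Bool) : List ℕ := p.map (fun t => if t then b else x)

/-- `e` contains an occurrence of the boolean-shaped pattern `p` -/
def OccP (p : List Bool) (e : List ℕ) : Prop := ∃ b x : ℕ, x < b ∧ numpat b x p <+ e

abbrev PB1 : List Bool := [true, false, true, true]
abbrev PB2 : List Bool := [true, true, false, true]
abbrev PB3 : List Bool := [true, true, true, false]

def msk (v : ℕ) (e : List ℕ) : List Bool := e.map (fun a => a == v)
def flt (v : ℕ) (e : List ℕ) : List ℕ := e.filter (fun a => !(a == v))

lemma mem_numpat_self {p : List Bool} (hp : true ∈ p) (b x : ℕ) : b ∈ numpat b x p := by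
  exact List.mem_map.mpr ⟨true, hp, by simp⟩

lemma occ_mono {p : List Bool} {e₁ e₂ : List ℕ} (h : e₁ <+ e₂) : OccP p e₁ → OccP p e₂ := by
  rintro ⟨b, x, hx, hs⟩; exact ⟨b, x, hx, hs.trans h⟩

lemma flt_sublist (v : ℕ) (e : List ℕ) : flt v e <+ e := List.filter_sublist

/-! ### ContainsPat ↔ OccP for the three patterns -/

lemma length_four {s : List ℕ} (h : s.length = 4) :
    ∃ a b c d : ℕ, s = [a, b, c, d] := by
  match s, h with
  | [a, b, c, d], _ => exact ⟨a, b, c, d, rfl⟩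


lemma getbang0 (a b c d : ℕ) : ([a,b,c,d] : List ℕ)[0]! = a := by simp
lemma getbang1 (a b c d : ℕ) : ([a,b,c,d] : List ℕ)[1]! = b := by simp
lemma getbang2 (a b c d : ℕ) : ([a,b,c,d] : List ℕ)[2]! = c := by simp
lemma getbang3 (a b c d : ℕ) : ([a,b,c,d] : List ℕ)[3]! = d := by simp

lemma numpat1_eq (b x : ℕ) : numpat b x PB1 = [b,x,b,b] := by simp [numpat]
lemma numpat2_eq (b x : ℕ) : numpat b x PB2 = [b,b,x,b] := by simp [numpat]
lemma numpat3_eq (b x : ℕ) : numpat b x PB3 = [b,b,b,x] := by simp [numpat]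

lemma contains1 (e : List ℕ) : ContainsPat e [1,0,1,1] ↔ OccP PB1 e := by
  constructor
  · rintro ⟨s, hs, hlen, hiso⟩
    have h4 : s.length = 4 := by simpa using hlen
    obtain ⟨a, b, c, d, rfl⟩ := length_four h4
    have h01 := hiso 0 1 (by simp) (by simp)
    have h02 := hiso 0 2 (by simp) (by simp)
    have h03 := hiso 0 3 (by simp) (by simp)
    simp only [getbang0, getbang1, getbang2, getbang3] at h01 h02 h03
    have hba : b < a := by
      rcases Nat.lt_trichotomy a b with h|h|h
      · exact absurd (h01.1.mp h) (by simp)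
      · exact absurd (h01.2.mp h) (by simp)
      · exact h
    have hac : a = c := by simpa using h02.2
    have had : a = d := by simpa using h03.2
    subst hac; subst had
    exact ⟨a, b, hba, by rw [numpat1_eq]; exact hs⟩
  · rintro ⟨b, x, hx, hs⟩
    refine ⟨numpat b x PB1, hs, by simp [numpat], ?_⟩
    rw [numpat1_eq]
    intro i j hi hj
    have hi' : i < 4 := by simpa using hi
    have hj' : j < 4 := by simpa using hj
    interval_cases i <;> interval_cases j <;> simp <;> omega

lemma contains2 (e : List ℕ) : ContainsPat e [1,1,0,1] ↔ OccP PB2 e := by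
  constructor
  · rintro ⟨s, hs, hlen, hiso⟩
    have h4 : s.length = 4 := by simpa using hlen
    obtain ⟨a, b, c, d, rfl⟩ := length_four h4
    have h01 := hiso 0 1 (by simp) (by simp)
    have h02 := hiso 0 2 (by simp) (by simp)
    have h03 := hiso 0 3 (by simp) (by simp)
    simp only [getbang0, getbang1, getbang2, getbang3] at h01 h02 h03
    have hca : c < a := by
      rcases Nat.lt_trichotomy a c with h|h|h
      · exact absurd (h02.1.mp h) (by simp)
      · exact absurd (h02.2.mp h) (by simp)
      · exact h
    have hab : a = b := by simpa using h01.2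
    have had : a = d := by simpa using h03.2
    subst hab; subst had
    exact ⟨a, c, hca, by rw [numpat2_eq]; exact hs⟩
  · rintro ⟨b, x, hx, hs⟩
    refine ⟨numpat b x PB2, hs, by simp [numpat], ?_⟩
    rw [numpat2_eq]
    intro i j hi hj
    have hi' : i < 4 := by simpa using hi
    have hj' : j < 4 := by simpa using hj
    interval_cases i <;> interval_cases j <;> simp <;> omega

lemma contains3 (e : List ℕ) : ContainsPat e [1,1,1,0] ↔ OccP PB3 e := by
  constructor
  · rintro ⟨s, hs, hlen, hiso⟩
    have h4 : s.length = 4 := by simpa using hlen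
    obtain ⟨a, b, c, d, rfl⟩ := length_four h4
    have h01 := hiso 0 1 (by simp) (by simp)
    have h02 := hiso 0 2 (by simp) (by simp)
    have h03 := hiso 0 3 (by simp) (by simp)
    simp only [getbang0, getbang1, getbang2, getbang3] at h01 h02 h03
    have hda : d < a := by
      rcases Nat.lt_trichotomy a d with h|h|h
      · exact absurd (h03.1.mp h) (by simp)
      · exact absurd (h03.2.mp h) (by simp)
      · exact h
    have hab : a = b := by simpa using h01.2
    have hac : a = c := by simpa using h02.2
    subst hab; subst hac
    exact ⟨a, d, hda, by rw [numpat3_eq]; exact hs⟩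
  · rintro ⟨b, x, hx, hs⟩
    refine ⟨numpat b x PB3, hs, by simp [numpat], ?_⟩
    rw [numpat3_eq]
    intro i j hi hj
    have hi' : i < 4 := by simpa using hi
    have hj' : j < 4 := by simpa using hj
    interval_cases i <;> interval_cases j <;> simp <;> omega

/-! ### Decomposition of occurrences at top value -/

lemma occ_fwd {p : List Bool} (hp : true ∈ p) (v : ℕ) (e : List ℕ)
    (he : ∀ x ∈ e, x ≤ v) :
    OccP p e → (p <+ msk v e ∨ OccP p (flt v e)) := by
  rintro ⟨b, x, hx, hsub⟩
  by_cases hb : b = v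
  · subst hb
    left
    have hxv : (x == b) = false := by simp; omega
    have hmap : (numpat b x p).map (fun a => a == b) = p := by
      rw [numpat, List.map_map]
      have : ∀ t ∈ p, ((fun a => a == b) ∘ (fun t => if t then b else x)) t = t := by
        intro t _
        cases t <;> simp_all
      rw [List.map_congr_left this]; simp
    rw [msk, ← hmap]
    exact hsub.map _
  · right
    have hbe : b ∈ e := hsub.subset (mem_numpat_self hp b x)
    have hbv : b < v := lt_of_le_of_ne (he b hbe) hb
    refine ⟨b, x, hx, ?_⟩
    have : (numpat b x p).filter (fun a => !(a == v)) = numpat b x p := by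
      rw [List.filter_eq_self]
      intro a ha
      rw [numpat, List.mem_map] at ha
      obtain ⟨t, _, rfl⟩ := ha
      cases t <;> simp <;> omega
    rw [flt, ← this]
    exact hsub.filter _

lemma occD1 (v : ℕ) (e : List ℕ) (hv : 0 < v) (he : ∀ x ∈ e, x ≤ v) :
    OccP PB1 e ↔ (PB1 <+ msk v e ∨ OccP PB1 (flt v e)) := by
  constructor
  · exact occ_fwd (by simp) v e he
  · rintro (h | h)
    · rw [msk, List.sublist_map_iff] at h
      obtain ⟨l', hsub, hmap⟩ := h
      have h4 : l'.length = 4 := by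
        have := congrArg List.length hmap; simpa using this.symm
      obtain ⟨a, b, c, d, rfl⟩ := length_four h4
      simp only [List.map_cons, List.map_nil, List.cons.injEq] at hmap
      obtain ⟨ha, hb, hc, hd, -⟩ := hmap
      have ha' : a = v := by simpa using ha.symm
      have hb' : b ≠ v := by simpa using hb.symm
      have hc' : c = v := by simpa using hc.symm
      have hd' : d = v := by simpa using hd.symm
      have hbe : b ∈ e := hsub.subset (by simp)
      have hbv : b < v := lt_of_le_of_ne (he b hbe) hb'
      refine ⟨v, b, hbv, ?_⟩
      rw [numpat1_eq]
      rw [ha', hc', hd'] at hsub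
      exact hsub
    · exact occ_mono (flt_sublist v e) h

lemma occD2 (v : ℕ) (e : List ℕ) (hv : 0 < v) (he : ∀ x ∈ e, x ≤ v) :
    OccP PB2 e ↔ (PB2 <+ msk v e ∨ OccP PB2 (flt v e)) := by
  constructor
  · exact occ_fwd (by simp) v e he
  · rintro (h | h)
    · rw [msk, List.sublist_map_iff] at h
      obtain ⟨l', hsub, hmap⟩ := h
      have h4 : l'.length = 4 := by
        have := congrArg List.length hmap; simpa using this.symm
      obtain ⟨a, b, c, d, rfl⟩ := length_four h4
      simp only [List.map_cons, List.map_nil, List.cons.injEq] at hmap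
      obtain ⟨ha, hb, hc, hd, -⟩ := hmap
      have ha' : a = v := by simpa using ha.symm
      have hb' : b = v := by simpa using hb.symm
      have hc' : c ≠ v := by simpa using hc.symm
      have hd' : d = v := by simpa using hd.symm
      have hce : c ∈ e := hsub.subset (by simp)
      have hcv : c < v := lt_of_le_of_ne (he c hce) hc'
      refine ⟨v, c, hcv, ?_⟩
      rw [numpat2_eq]
      rw [ha', hb', hd'] at hsub
      exact hsub
    · exact occ_mono (flt_sublist v e) h

lemma occD3 (v : ℕ) (e : List ℕ) (hv : 0 < v) (he : ∀ x ∈ e, x ≤ v) :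
    OccP PB3 e ↔ (PB3 <+ msk v e ∨ OccP PB3 (flt v e)) := by
  constructor
  · exact occ_fwd (by simp) v e he
  · rintro (h | h)
    · rw [msk, List.sublist_map_iff] at h
      obtain ⟨l', hsub, hmap⟩ := h
      have h4 : l'.length = 4 := by
        have := congrArg List.length hmap; simpa using this.symm
      obtain ⟨a, b, c, d, rfl⟩ := length_four h4
      simp only [List.map_cons, List.map_nil, List.cons.injEq] at hmap
      obtain ⟨ha, hb, hc, hd, -⟩ := hmap
      have ha' : a = v := by simpa using ha.symm
      have hb' : b = v := by simpa using hb.symm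
      have hc' : c = v := by simpa using hc.symm
      have hd' : d ≠ v := by simpa using hd.symm
      have hde : d ∈ e := hsub.subset (by simp)
      have hdv : d < v := lt_of_le_of_ne (he d hde) hd'
      refine ⟨v, d, hdv, ?_⟩
      rw [numpat3_eq]
      rw [ha', hb', hc'] at hsub
      exact hsub
    · exact occ_mono (flt_sublist v e) h

/-! ### keepF and mrg -/

def keepF : List ℕ → List Bool → List ℕ
  | _, [] => []
  | [], _ => []
  | _ :: l, true :: w => keepF l w
  | a :: l, false :: w => a :: keepF l w

def mrg (v : ℕ) : List Bool → List ℕ → List ℕ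
  | [], _ => []
  | true :: w, f => v :: mrg v w f
  | false :: w, x :: f => x :: mrg v w f
  | false :: _, [] => []

lemma keepF_sublist (L : List ℕ) (w : List Bool) : keepF L w <+ L := by
  induction L generalizing w with
  | nil => cases w <;> simp [keepF]
  | cons a l ih =>
    cases w with
    | nil => simp [keepF]
    | cons b w' =>
      cases b with
      | true => exact (ih w').trans (List.sublist_cons_self a l)
      | false => exact List.cons_sublist_cons.mpr (ih w')

lemma keepF_mem {L : List ℕ} {w : List Bool} {x : ℕ} (h : x ∈ keepF L w) : x ∈ L :=
  (keepF_sublist L w).subset h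

lemma keepF_length {L : List ℕ} {w : List Bool} (h : w.length = L.length) :
    (keepF L w).length = w.count false := by
  induction w generalizing L with
  | nil => cases L <;> simp [keepF]
  | cons b w' ih =>
    cases L with
    | nil => simp at h
    | cons a l =>
      cases b with
      | true => simp [keepF, ih (by simpa using h), List.count_cons]
      | false => simp [keepF, ih (by simpa using h), List.count_cons]

lemma keepF_append {L1 L2 : List ℕ} {t w : List Bool} (h : t.length = L1.length) :
    keepF (L1 ++ L2) (t ++ w) = keepF L1 t ++ keepF L2 w := by
  induction t generalizing L1 with
  | nil =>
    cases L1 with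
    | nil => simp [keepF]
    | cons a l => simp at h
  | cons b t' ih =>
    cases L1 with
    | nil => simp at h
    | cons a l =>
      cases b with
      | true => simpa [keepF] using ih (by simpa using h)
      | false => simpa [keepF] using ih (by simpa using h)

lemma keepF_allF {L : List ℕ} {t : List Bool} (htF : ∀ b ∈ t, b = false)
    (h : t.length = L.length) : keepF L t = L := by
  induction t generalizing L with
  | nil => cases L with
    | nil => rfl
    | cons a l => simp at h
  | cons b t' ih =>
    cases L with
    | nil => simp at h
    | cons a l =>
      have hb : b = false := htF b (by simp)
      subst hb
      simp [keepF, ih (fun x hx => htF x (by simp [hx])) (by simpa using h)]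

lemma mrg_msk_flt (v : ℕ) (e : List ℕ) : mrg v (msk v e) (flt v e) = e := by
  induction e with
  | nil => rfl
  | cons a l ih =>
    by_cases h : a = v
    · have hb : (a == v) = true := by simp [h]
      have h1 : msk v (a :: l) = true :: msk v l := by simp [msk, hb]
      have h2 : flt v (a :: l) = flt v l := by simp [flt, hb]
      rw [h1, h2]
      show v :: mrg v (msk v l) (flt v l) = a :: l
      rw [ih, h]
    · have hb : (a == v) = false := by simp [h]
      have h1 : msk v (a :: l) = false :: msk v l := by simp [msk, hb]
      have h2 : flt v (a :: l) = a :: flt v l := by simp [flt, hb]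
      rw [h1, h2]
      show a :: mrg v (msk v l) (flt v l) = a :: l
      rw [ih]

lemma mrg_msk {v : ℕ} {w : List Bool} {f : List ℕ}
    (hf : ∀ x ∈ f, (x == v) = false) (hl : f.length = w.count false) :
    msk v (mrg v w f) = w := by
  induction w generalizing f with
  | nil => simp [mrg, msk]
  | cons b w' ih =>
    cases b with
    | true =>
      show msk v (v :: mrg v w' f) = true :: w'
      have h1 : msk v (v :: mrg v w' f) = true :: msk v (mrg v w' f) := by simp [msk]
      rw [h1, ih hf (by simpa [List.count_cons] using hl)]
    | false =>
      cases f with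
      | nil => simp [List.count_cons] at hl
      | cons x f' =>
        have hl' : f'.length = w'.count false := by
          simp [List.count_cons] at hl; omega
        show msk v (x :: mrg v w' f') = false :: w'
        have h1 : msk v (x :: mrg v w' f') = (x == v) :: msk v (mrg v w' f') := by
          simp [msk]
        rw [h1, hf x (by simp), ih (fun y hy => hf y (by simp [hy])) hl']

lemma mrg_flt {v : ℕ} {w : List Bool} {f : List ℕ}
    (hf : ∀ x ∈ f, (x == v) = false) (hl : f.length = w.count false) :
    flt v (mrg v w f) = f := by
  induction w generalizing f with
  | nil =>
    cases f with
    | nil => rfl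
    | cons x f' => simp at hl
  | cons b w' ih =>
    cases b with
    | true =>
      show flt v (v :: mrg v w' f) = f
      have h2 : flt v (v :: mrg v w' f) = flt v (mrg v w' f) := by simp [flt]
      rw [h2, ih hf (by simpa [List.count_cons] using hl)]
    | false =>
      cases f with
      | nil => simp [List.count_cons] at hl
      | cons x f' =>
        have hl' : f'.length = w'.count false := by
          simp [List.count_cons] at hl; omega
        show flt v (x :: mrg v w' f') = x :: f'
        have h2 : flt v (x :: mrg v w' f') = x :: flt v (mrg v w' f') := by
          simp [flt, hf x (by simp)]
        rw [h2, ih (fun y hy => hf y (by simp [hy])) hl']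

lemma mrg_allF {v : ℕ} {w : List Bool} {f : List ℕ}
    (hw : ∀ b ∈ w, b = false) (hl : f.length = w.length) :
    mrg v w f = f := by
  induction w generalizing f with
  | nil =>
    cases f with
    | nil => rfl
    | cons x f' => simp at hl
  | cons b w' ih =>
    have hb : b = false := hw b (by simp)
    subst hb
    cases f with
    | nil => simp at hl
    | cons x f' =>
      show x :: mrg v w' f' = x :: f'
      rw [ih (fun y hy => hw y (by simp [hy])) (by simpa using hl)]

/-! ### Forall₂ lemmas -/

lemma fa_le {c : ℕ} {e L : List ℕ} (h : List.Forall₂ (fun x l => x < l ∧ x ≤ c) e L) :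
    ∀ x ∈ e, x ≤ c := by
  induction h with
  | nil => simp
  | cons h _ ih =>
    intro x hx
    rcases List.mem_cons.mp hx with rfl | hx
    · exact h.2
    · exact ih x hx

lemma fa_filter {R : ℕ → ℕ → Prop} {e L : List ℕ} (v : ℕ)
    (h : List.Forall₂ R e L) :
    List.Forall₂ (fun x l => R x l ∧ (x == v) = false) (flt v e) (keepF L (msk v e)) := by
  induction h with
  | nil => exact List.Forall₂.nil
  | @cons a lu e' L' h _ ih =>
    by_cases hav : (a == v) = true
    · have h1 : flt v (a :: e') = flt v e' := by simp [flt, hav]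
      have h2 : keepF (lu :: L') (msk v (a :: e')) = keepF L' (msk v e') := by
        simp [msk, hav, keepF]
      rw [h1, h2]; exact ih
    · have hav' : (a == v) = false := by simpa using hav
      have h1 : flt v (a :: e') = a :: flt v e' := by simp [flt, hav']
      have h2 : keepF (lu :: L') (msk v (a :: e')) = lu :: keepF L' (msk v e') := by
        simp [msk, hav', keepF]
      rw [h1, h2]
      exact List.Forall₂.cons ⟨h, hav'⟩ ih

lemma fa_compat {v : ℕ} {e L : List ℕ}
    (h : List.Forall₂ (fun x l => x < l ∧ x ≤ v) e L) :
    List.Forall₂ (fun b l => b = true → v < l) (msk v e) L := by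
  induction h with
  | nil => exact List.Forall₂.nil
  | @cons a lu e' L' h _ ih =>
    refine List.Forall₂.cons ?_ ih
    intro hb
    have : a = v := by simpa using hb
    subst this
    exact h.1

lemma fa_merge {c v : ℕ} (hcv : c < v) : ∀ {w : List Bool} {L f : List ℕ},
    List.Forall₂ (fun x l => x < l ∧ x ≤ c) f (keepF L w) →
    List.Forall₂ (fun b l => b = true → v < l) w L →
    f.length = w.count false →
    List.Forall₂ (fun x l => x < l ∧ x ≤ v) (mrg v w f) L := by
  intro w
  induction w with
  | nil =>
    intro L f _ h2 _
    cases h2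
    exact List.Forall₂.nil
  | cons b w' ih =>
    intro L f h1 h2 hl
    obtain ⟨lu, L2, hblu, h2', rfl⟩ := List.forall₂_cons_left_iff.mp h2
    cases b with
    | true =>
      refine List.Forall₂.cons ⟨hblu rfl, le_refl v⟩ ?_
      exact ih (by simpa [keepF] using h1) h2' (by simpa [List.count_cons] using hl)
    | false =>
      simp only [keepF] at h1
      obtain ⟨x, f', hx, h1', rfl⟩ := List.forall₂_cons_right_iff.mp h1
      refine List.Forall₂.cons ⟨hx.1, le_trans hx.2 (le_of_lt hcv)⟩ ?_
      refine ih h1' h2' ?_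
      simp [List.count_cons] at hl; omega

lemma fa_decomp {R : Bool → ℕ → Prop} {t r : List Bool} {b : Bool} {L : List ℕ}
    (h : List.Forall₂ R (t ++ b :: r) L) :
    ∃ L1 lu L2, L = L1 ++ lu :: L2 ∧ L1.length = t.length ∧
      List.Forall₂ R t L1 ∧ R b lu ∧ List.Forall₂ R r L2 := by
  induction t generalizing L with
  | nil =>
    obtain ⟨lu, L2, hb, h', rfl⟩ := List.forall₂_cons_left_iff.mp h
    exact ⟨[], lu, L2, rfl, rfl, List.Forall₂.nil, hb, h'⟩
  | cons a t' ih =>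
    obtain ⟨lu', L', ha, h', rfl⟩ := List.forall₂_cons_left_iff.mp h
    obtain ⟨L1, lu, L2, rfl, hlen, hfa1, hfa2, hfa3⟩ := ih h'
    exact ⟨lu' :: L1, lu, L2, rfl, by simp [hlen], List.Forall₂.cons ha hfa1, hfa2, hfa3⟩

lemma fa_of_mem {R : Bool → ℕ → Prop} : ∀ {w : List Bool} {L : List ℕ},
    w.length = L.length → (∀ l ∈ L, ∀ b, R b l) → List.Forall₂ R w L := by
  intro w
  induction w with
  | nil =>
    intro L h _
    cases L with
    | nil => exact List.Forall₂.nil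
    | cons a l => simp at h
  | cons b w' ih =>
    intro L h hR
    cases L with
    | nil => simp at h
    | cons a l =>
      exact List.Forall₂.cons (hR a (by simp) b)
        (ih (by simpa using h) (fun y hy bb => hR y (by simp [hy]) bb))

lemma fa_recap {c v : ℕ} (hcv : c < v) : ∀ {f M M' : List ℕ},
    List.Forall₂ (fun x l => x < l ∧ x ≤ c) f M →
    M.map (fun l => min l v) = M'.map (fun l => min l v) →
    List.Forall₂ (fun x l => x < l ∧ x ≤ c) f M' := by
  intro f
  induction f with
  | nil =>
    intro M M' h hm
    cases h
    cases M' with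
    | nil => exact List.Forall₂.nil
    | cons a l => simp at hm
  | cons x f' ih =>
    intro M M' h hm
    obtain ⟨m, M2, hx, h', rfl⟩ := List.forall₂_cons_left_iff.mp h
    cases M' with
    | nil => simp at hm
    | cons m' M2' =>
      simp only [List.map_cons, List.cons.injEq] at hm
      refine List.Forall₂.cons ⟨?_, hx.2⟩ (ih h' hm.2)
      have h1 : x < min m v := lt_min hx.1 (lt_of_le_of_lt hx.2 hcv)
      rw [hm.1] at h1
      exact lt_of_lt_of_le h1 (min_le_left m' v)

lemma fa_cap0 {e L : List ℕ} {m : ℕ} (h : List.Forall₂ (· < ·) e L)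
    (hm : ∀ l ∈ L, l ≤ m) : List.Forall₂ (fun x l => x < l ∧ x ≤ m) e L := by
  induction h with
  | nil => exact List.Forall₂.nil
  | @cons a lu e' L' h _ ih =>
    exact List.Forall₂.cons ⟨h, le_trans (le_of_lt h) (hm lu (by simp))⟩
      (ih (fun y hy => hm y (by simp [hy])))

/-! ### list splitting helpers -/

lemma exists_split_true {w : List Bool} (h : true ∈ w) :
    ∃ t r, (∀ b ∈ t, b = false) ∧ w = t ++ true :: r := by
  induction w with
  | nil => simp at h
  | cons b w' ih =>
    cases b with
    | true => exact ⟨[], w', by simp, rfl⟩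
    | false =>
      have h' : true ∈ w' := by simpa using h
      obtain ⟨t, r, htF, rfl⟩ := ih h'
      refine ⟨false :: t, r, ?_, rfl⟩
      intro x hx
      rcases List.mem_cons.mp hx with rfl | hx
      · rfl
      · exact htF x hx

lemma exists_endT_split (r : List Bool) :
    ∃ k z, (∀ b ∈ z, b = false) ∧ r = k ++ z ∧ (k = [] ∨ ∃ k0, k = k0 ++ [true]) := by
  induction r with
  | nil => exact ⟨[], [], by simp, rfl, Or.inl rfl⟩
  | cons b r' ih =>
    obtain ⟨k, z, hzF, rfl, hk⟩ := ih
    rcases hk with rfl | ⟨k0, rfl⟩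
    · cases b with
      | true => exact ⟨[true], z, hzF, by simp, Or.inr ⟨[], rfl⟩⟩
      | false =>
        refine ⟨[], false :: z, ?_, by simp, Or.inl rfl⟩
        intro x hx
        rcases List.mem_cons.mp hx with rfl | hx
        · rfl
        · exact hzF x hx
    · exact ⟨b :: (k0 ++ [true]), z, hzF, by simp, Or.inr ⟨b :: k0, by simp⟩⟩

lemma tw_allF {t : List Bool} (htF : ∀ b ∈ t, b = false) (r : List Bool) :
    (t ++ true :: r).takeWhile (fun b => !b) = t ∧
    (t ++ true :: r).dropWhile (fun b => !b) = true :: r := by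
  induction t with
  | nil => constructor <;> simp
  | cons b t' ih =>
    have hb : b = false := htF b (by simp)
    subst hb
    obtain ⟨ih1, ih2⟩ := ih (fun x hx => htF x (by simp [hx]))
    constructor <;> simp [List.takeWhile_cons, List.dropWhile_cons, ih1, ih2]

/-! ### revMid -/

def revMid (w : List Bool) : List Bool :=
  w.takeWhile (fun b => !b) ++
    ((w.dropWhile (fun b => !b)).reverse.dropWhile (fun b => !b)) ++
    ((w.dropWhile (fun b => !b)).reverse.takeWhile (fun b => !b)).reverse

lemma revMid_core {t k z : List Bool} (htF : ∀ b ∈ t, b = false) (hzF : ∀ b ∈ z, b = false)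
    (hk : k = [] ∨ ∃ k0, k = k0 ++ [true]) :
    revMid (t ++ true :: (k ++ z)) = t ++ ((k.reverse ++ [true]) ++ z) := by
  obtain ⟨h1, h2⟩ := tw_allF htF (k ++ z)
  have hzF' : ∀ b ∈ z.reverse, b = false := fun b hb => hzF b (by simpa using hb)
  rcases hk with rfl | ⟨k0, rfl⟩
  · obtain ⟨g1, g2⟩ := tw_allF hzF' ([] : List Bool)
    unfold revMid
    rw [h1, h2]
    have hrev : (true :: (([] : List Bool) ++ z)).reverse = z.reverse ++ true :: [] := by simp
    rw [hrev, g1, g2]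
    simp
  · obtain ⟨g1, g2⟩ := tw_allF hzF' (k0.reverse ++ [true])
    unfold revMid
    rw [h1, h2]
    have hrev : (true :: ((k0 ++ [true]) ++ z)).reverse
        = z.reverse ++ true :: (k0.reverse ++ [true]) := by simp
    rw [hrev, g1, g2]
    simp

lemma revMid_nilT {w : List Bool} (h : w.count true = 0) : revMid w = w := by
  have hF : ∀ b ∈ w, b = false := by
    intro b hb
    cases b with
    | false => rfl
    | true => exact absurd hb (List.count_eq_zero.mp h)
  have hdrop : w.dropWhile (fun b => !b) = [] :=
    List.dropWhile_eq_nil_iff.mpr (fun x hx => by rw [hF x hx]; rfl)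
  have htake : w.takeWhile (fun b => !b) = w := by
    have h0 := List.takeWhile_append_dropWhile (p := fun b => !b) (l := w)
    rwa [hdrop, List.append_nil] at h0
  unfold revMid
  rw [hdrop, htake]
  simp

lemma revMid_cons {t r : List Bool} (htF : ∀ b ∈ t, b = false) :
    ∃ r', revMid (t ++ true :: r) = t ++ true :: r' ∧
      r'.count false = r.count false ∧ r'.count true = r.count true := by
  obtain ⟨k, z, hzF, rfl, hk⟩ := exists_endT_split r
  rw [revMid_core htF hzF hk]
  rcases hk with rfl | ⟨k0, rfl⟩
  · exact ⟨z, by simp, by simp, by simp⟩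
  · refine ⟨k0.reverse ++ true :: z, by simp, ?_, ?_⟩ <;>
      simp [List.count_append, List.count_cons, List.count_reverse] <;> omega

lemma revMid_invol (w : List Bool) : revMid (revMid w) = w := by
  by_cases hT : true ∈ w
  · obtain ⟨t, r, htF, rfl⟩ := exists_split_true hT
    obtain ⟨k, z, hzF, rfl, hk⟩ := exists_endT_split r
    rw [revMid_core htF hzF hk]
    rcases hk with rfl | ⟨k0, rfl⟩
    · have h0 : t ++ ((List.reverse ([]:List Bool) ++ [true]) ++ z)
          = t ++ true :: (([] : List Bool) ++ z) := by simp
      rw [h0, revMid_core htF hzF (Or.inl rfl)]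
      simp
    · have h0 : t ++ (((k0 ++ [true]).reverse ++ [true]) ++ z)
          = t ++ true :: ((k0.reverse ++ [true]) ++ z) := by simp
      rw [h0, revMid_core htF hzF (Or.inr ⟨k0.reverse, rfl⟩)]
      simp
  · have h0 : w.count true = 0 := List.count_eq_zero.mpr hT
    rw [revMid_nilT h0, revMid_nilT h0]

/-! ### sublists through all-false borders -/

lemma sub_head_true {q a r : List Bool} {q0 : List Bool} (h : q <+ a ++ r)
    (haF : ∀ b ∈ a, b = false) (hq : q = true :: q0) : q <+ r := by
  subst hq
  rw [List.sublist_append_iff] at h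
  obtain ⟨l₁, l₂, heq, h1, h2⟩ := h
  cases l₁ with
  | nil =>
    rw [List.nil_append] at heq
    rw [heq]; exact h2
  | cons b l₁' =>
    have hbm : b ∈ a := h1.subset (by simp)
    have hb : true = b := by
      simp only [List.cons_append, List.cons.injEq] at heq
      exact heq.1
    rw [haF b hbm] at hb
    exact absurd hb (by simp)

lemma sub_last_true {q r d : List Bool} {q0 : List Bool} (h : q <+ r ++ d)
    (hdF : ∀ b ∈ d, b = false) (hq : q = q0 ++ [true]) : q <+ r := by
  have h' : q.reverse <+ d.reverse ++ r.reverse := by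
    have h2 := h.reverse
    rwa [List.reverse_append] at h2
  have hq' : q.reverse = true :: q0.reverse := by simp [hq]
  have h3 := sub_head_true h' (fun b hb => hdF b (by simpa using hb)) hq'
  exact List.reverse_sublist.mp h3

lemma GT12 {w : List Bool} (h : ¬ ((PB1 : List Bool) <+ w)) :
    ¬ ((PB2 : List Bool) <+ revMid w) := by
  intro hc
  by_cases hT : true ∈ w
  · obtain ⟨t, r, htF, rfl⟩ := exists_split_true hT
    obtain ⟨k, z, hzF, rfl, hk⟩ := exists_endT_split r
    rw [revMid_core htF hzF hk] at hc
    have hc1 : (PB2 : List Bool) <+ (k.reverse ++ [true]) ++ z := sub_head_true hc htF rfl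
    have hc2 : (PB2 : List Bool) <+ k.reverse ++ [true] :=
      sub_last_true (q0 := [true, true, false]) hc1 hzF (by rfl)
    have hc3 : (PB1 : List Bool) <+ true :: k := by simpa using hc2.reverse
    have hsub : (true :: k) <+ t ++ true :: (k ++ z) := by
      refine List.Sublist.trans ?_ (List.sublist_append_right t _)
      exact List.cons_sublist_cons.mpr (List.sublist_append_left k z)
    exact h (hc3.trans hsub)
  · rw [revMid_nilT (List.count_eq_zero.mpr hT)] at hc
    exact hT (hc.subset (by simp))

lemma GT21 {w : List Bool} (h : ¬ ((PB2 : List Bool) <+ w)) :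
    ¬ ((PB1 : List Bool) <+ revMid w) := by
  intro hc
  by_cases hT : true ∈ w
  · obtain ⟨t, r, htF, rfl⟩ := exists_split_true hT
    obtain ⟨k, z, hzF, rfl, hk⟩ := exists_endT_split r
    rw [revMid_core htF hzF hk] at hc
    have hc1 : (PB1 : List Bool) <+ (k.reverse ++ [true]) ++ z := sub_head_true hc htF rfl
    have hc2 : (PB1 : List Bool) <+ k.reverse ++ [true] :=
      sub_last_true (q0 := [true, false, true]) hc1 hzF (by rfl)
    have hc3 : (PB2 : List Bool) <+ true :: k := by simpa using hc2.reverse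
    have hsub : (true :: k) <+ t ++ true :: (k ++ z) := by
      refine List.Sublist.trans ?_ (List.sublist_append_right t _)
      exact List.cons_sublist_cons.mpr (List.sublist_append_left k z)
    exact h (hc3.trans hsub)
  · rw [revMid_nilT (List.count_eq_zero.mpr hT)] at hc
    exact hT (hc.subset (by simp))

/-! ### splitT and the sorted maps -/

def splitT : ℕ → List Bool → List Bool × List Bool
  | 0, w => ([], w)
  | _+1, [] => ([], [])
  | k+1, false :: w => ((false :: (splitT (k+1) w).1), (splitT (k+1) w).2)
  | k+1, true :: w => ((true :: (splitT k w).1), (splitT k w).2)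

lemma sp_join : ∀ (k : ℕ) (w : List Bool), (splitT k w).1 ++ (splitT k w).2 = w := by
  intro k w
  induction w generalizing k with
  | nil => cases k <;> simp [splitT]
  | cons b w' ih =>
    cases k with
    | zero => simp [splitT]
    | succ k' => cases b <;> simp [splitT, ih]

lemma sp_count_le : ∀ (k : ℕ) (w : List Bool), (splitT k w).1.count true ≤ k := by
  intro k w
  induction w generalizing k with
  | nil => cases k <;> simp [splitT]
  | cons b w' ih =>
    cases k with
    | zero => simp [splitT]
    | succ k' =>
      cases b with
      | false =>
        have := ih (k' + 1)
        simp [splitT, List.count_cons]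
        omega
      | true =>
        have := ih k'
        simp [splitT, List.count_cons]
        omega

lemma sp_ends : ∀ (k : ℕ) (w : List Bool), 0 < k → (splitT k w).2 ≠ [] →
    (splitT k w).1.count true = k ∧ ∃ p', (splitT k w).1 = p' ++ [true] := by
  intro k w
  induction w generalizing k with
  | nil =>
    intro hk hne
    cases k with
    | zero => omega
    | succ k' => simp [splitT] at hne
  | cons b w' ih =>
    intro hk hne
    cases k with
    | zero => omega
    | succ k' =>
      cases b with
      | false =>
        simp only [splitT] at hne ⊢
        obtain ⟨hc, p', hp'⟩ := ih (k' + 1) (by omega) hne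
        refine ⟨by simp [List.count_cons, hc], false :: p', by simp [hp']⟩
      | true =>
        cases k' with
        | zero =>
          simp only [splitT] at hne ⊢
          exact ⟨by simp, [], by simp⟩
        | succ k'' =>
          simp only [splitT] at hne ⊢
          obtain ⟨hc, p', hp'⟩ := ih (k'' + 1) (by omega) hne
          refine ⟨by simp [List.count_cons, hc], true :: p', by simp [hp']⟩

lemma sp_resplit : ∀ (p z : List Bool) (k : ℕ), p.count true = k →
    (p = [] ∨ ∃ p', p = p' ++ [true]) → splitT k (p ++ z) = (p, z) := by
  intro p
  induction p with
  | nil =>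
    intro z k hk _
    simp at hk
    subst hk
    simp [splitT]
  | cons b p' ih =>
    intro z k hk hend
    rcases hend with h | ⟨p0, hp0⟩
    · simp at h
    · cases b with
      | true =>
        have hk' : k = p'.count true + 1 := by
          rw [← hk]; simp [List.count_cons]
        subst hk'
        have hend' : p' = [] ∨ ∃ p'', p' = p'' ++ [true] := by
          cases p0 with
          | nil =>
            left
            simpa using hp0
          | cons c p0' =>
            right
            refine ⟨p0', ?_⟩
            have := hp0
            simp only [List.cons_append, List.cons.injEq] at this
            exact this.2
        show splitT (p'.count true + 1) (true :: (p' ++ z)) = (true :: p', z)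
        simp only [splitT]
        rw [ih z (p'.count true) rfl hend']
      | false =>
        cases p0 with
        | nil => simp at hp0
        | cons c p0' =>
          simp only [List.cons_append, List.cons.injEq] at hp0
          have hp'' : p' = p0' ++ [true] := hp0.2
          have hkk : k = p'.count true := by rw [← hk]; simp [List.count_cons]
          have hpos : 0 < p'.count true := by
            rw [hp'']; simp [List.count_append]
          subst hkk
          cases hh : p'.count true with
          | zero => omega
          | succ k'' =>
            simp only [splitT, List.cons_append]
            rw [← hh, ih z (p'.count true) rfl (Or.inr ⟨p0', hp''⟩)]

lemma sp_prefix {t : List Bool} (htF : ∀ b ∈ t, b = false) (k : ℕ) (r : List Bool) :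
    splitT (k+1) (t ++ true :: r) = (t ++ true :: (splitT k r).1, (splitT k r).2) := by
  induction t with
  | nil => simp [splitT]
  | cons b t' ih =>
    have hb : b = false := htF b (by simp)
    subst hb
    have h1 := ih (fun x hx => htF x (by simp [hx]))
    simp only [List.cons_append, splitT, List.append_eq, h1]

def sortF (s : List Bool) : List Bool :=
  List.replicate (s.count false) false ++ List.replicate (s.count true) true

def sortT (s : List Bool) : List Bool :=
  List.replicate (s.count true) true ++ List.replicate (s.count false) false

def phiBC (w : List Bool) : List Bool := (splitT 2 w).1 ++ sortF (splitT 2 w).2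
def psiBC (w : List Bool) : List Bool := (splitT 2 w).1 ++ sortT (splitT 2 w).2

lemma suf_nil_of_nilT {w : List Bool} (h : w.count true = 0) : (splitT 2 w).2 = [] := by
  by_contra hne
  obtain ⟨hc, -⟩ := sp_ends 2 w (by omega) hne
  have hj := congrArg (fun l => List.count true l) (sp_join 2 w)
  simp only [List.count_append] at hj
  omega

lemma phiBC_nilT {w : List Bool} (h : w.count true = 0) : phiBC w = w := by
  have hsuf := suf_nil_of_nilT h
  have hj := sp_join 2 w
  rw [hsuf, List.append_nil] at hj
  rw [phiBC, hsuf, hj]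
  simp [sortF]

lemma psiBC_nilT {w : List Bool} (h : w.count true = 0) : psiBC w = w := by
  have hsuf := suf_nil_of_nilT h
  have hj := sp_join 2 w
  rw [hsuf, List.append_nil] at hj
  rw [psiBC, hsuf, hj]
  simp [sortT]

lemma count_sortF (s : List Bool) :
    (sortF s).count false = s.count false ∧ (sortF s).count true = s.count true := by
  constructor <;> simp [sortF, List.count_append, List.count_replicate]

lemma count_sortT (s : List Bool) :
    (sortT s).count false = s.count false ∧ (sortT s).count true = s.count true := by
  constructor <;> simp [sortT, List.count_append, List.count_replicate]

lemma phiBC_cons {t : List Bool} (htF : ∀ b ∈ t, b = false) (r : List Bool) :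
    ∃ r', phiBC (t ++ true :: r) = t ++ true :: r' ∧
      r'.count false = r.count false ∧ r'.count true = r.count true := by
  have hs := sp_prefix htF 1 r
  refine ⟨(splitT 1 r).1 ++ sortF (splitT 1 r).2, ?_, ?_, ?_⟩
  · rw [phiBC, hs]
    simp
  · have hj := congrArg (fun l => List.count false l) (sp_join 1 r)
    simp only [List.count_append] at hj ⊢
    rw [(count_sortF _).1]
    omega
  · have hj := congrArg (fun l => List.count true l) (sp_join 1 r)
    simp only [List.count_append] at hj ⊢
    rw [(count_sortF _).2]
    omega

lemma psiBC_cons {t : List Bool} (htF : ∀ b ∈ t, b = false) (r : List Bool) :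
    ∃ r', psiBC (t ++ true :: r) = t ++ true :: r' ∧
      r'.count false = r.count false ∧ r'.count true = r.count true := by
  have hs := sp_prefix htF 1 r
  refine ⟨(splitT 1 r).1 ++ sortT (splitT 1 r).2, ?_, ?_, ?_⟩
  · rw [psiBC, hs]
    simp
  · have hj := congrArg (fun l => List.count false l) (sp_join 1 r)
    simp only [List.count_append] at hj ⊢
    rw [(count_sortT _).1]
    omega
  · have hj := congrArg (fun l => List.count true l) (sp_join 1 r)
    simp only [List.count_append] at hj ⊢
    rw [(count_sortT _).2]
    omega

lemma sorted_decomp_FT {l : List Bool} {p q : ℕ}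
    (h : l <+ List.replicate p false ++ List.replicate q true) :
    ∃ i j, l = List.replicate i false ++ List.replicate j true := by
  rw [List.sublist_append_iff] at h
  obtain ⟨a, b, rfl, ha, hb⟩ := h
  rw [List.sublist_replicate_iff] at ha hb
  obtain ⟨i, -, rfl⟩ := ha
  obtain ⟨j, -, rfl⟩ := hb
  exact ⟨i, j, rfl⟩

lemma sorted_decomp_TF {l : List Bool} {p q : ℕ}
    (h : l <+ List.replicate q true ++ List.replicate p false) :
    ∃ i j, l = List.replicate i true ++ List.replicate j false := by
  rw [List.sublist_append_iff] at h
  obtain ⟨a, b, rfl, ha, hb⟩ := h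
  rw [List.sublist_replicate_iff] at ha hb
  obtain ⟨i, -, rfl⟩ := ha
  obtain ⟨j, -, rfl⟩ := hb
  exact ⟨i, j, rfl⟩

lemma GT23 {w : List Bool} (h : ¬ ((PB2 : List Bool) <+ w)) :
    ¬ ((PB3 : List Bool) <+ phiBC w) := by
  intro hc
  rw [phiBC, List.sublist_append_iff] at hc
  obtain ⟨l₁, l₂, heq, h1, h2⟩ := hc
  have hcnt : l₁.count true ≤ 2 := le_trans (h1.count_le true) (sp_count_le 2 w)
  obtain ⟨i, j, rfl⟩ := sorted_decomp_FT (by simpa [sortF] using h2)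
  cases j with
  | zero =>
    have h3 := congrArg (fun l => List.count true l) heq
    simp [List.count_append, List.count_replicate, List.count_cons] at h3
    omega
  | succ j' =>
    have h4 := congrArg List.reverse heq
    simp only [List.reverse_append, List.reverse_cons, List.reverse_replicate,
      List.cons_append, List.nil_append, List.reverse_nil] at h4
    cases j' with
    | zero => simp at h4
    | succ j'' => rw [List.replicate_succ] at h4; simp at h4

lemma pre_no_TTF {p' : List Bool} (hc : p'.count true ≤ 1) :
    ¬ (([true, true, false] : List Bool) <+ p' ++ [true]) := by
  intro h
  have h' := h.reverse
  rw [List.reverse_append] at h'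
  have h'' : ([false, true, true] : List Bool) <+ true :: p'.reverse := by simpa using h'
  rw [List.sublist_cons_iff] at h''
  rcases h'' with h3 | ⟨rr, hrr, -⟩
  · have := h3.count_le true
    simp [List.count_cons, List.count_reverse] at this
    omega
  · simp at hrr

lemma GT32 {w : List Bool} (h : ¬ ((PB3 : List Bool) <+ w)) :
    ¬ ((PB2 : List Bool) <+ psiBC w) := by
  intro hc
  rw [psiBC, List.sublist_append_iff] at hc
  obtain ⟨l₁, l₂, heq, h1, h2⟩ := hc
  obtain ⟨i, j, rfl⟩ := sorted_decomp_TF (by simpa [sortT] using h2)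
  cases j with
  | succ j' =>
    -- pattern would end in false, impossible since it ends in true
    have h4 := congrArg List.reverse heq
    simp only [List.reverse_append, List.reverse_cons, List.reverse_replicate,
      List.cons_append, List.nil_append, List.reverse_nil] at h4
    cases j' with
    | zero => simp at h4
    | succ j'' => rw [List.replicate_succ] at h4; simp at h4
  | zero =>
    have hcnt : l₁.count true ≤ 2 := le_trans (h1.count_le true) (sp_count_le 2 w)
    cases i with
    | zero =>
      have h3 := congrArg (fun l => List.count true l) heq
      simp [List.count_append, List.count_replicate, List.count_cons] at h3
      omega
    | succ i' =>
      -- suffix is nonempty, so pre = p' ++ [true] with count true p' = 1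
      have hsufne : (splitT 2 w).2 ≠ [] := by
        intro h0
        rw [h0] at h2
        have h5 : List.replicate (i' + 1) true ++ List.replicate 0 false <+ ([] : List Bool) := by
          simpa [sortT] using h2
        have := List.sublist_nil.mp h5
        simp [List.replicate_succ] at this
      obtain ⟨hc2, p', hp'⟩ := sp_ends 2 w (by omega) hsufne
      have hcp' : p'.count true = 1 := by
        rw [hp'] at hc2
        simp [List.count_append] at hc2
        omega
      cases i' with
      | zero =>
        -- l₂ = [true], l₁ = [true,true,false]
        have heq' : ([true, true, false] : List Bool) ++ [true]
            = l₁ ++ (List.replicate 1 true ++ List.replicate 0 false) := by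
          simpa using heq
        have h6 := List.append_inj' heq' (by simp)
        have h7 : ([true, true, false] : List Bool) <+ p' ++ [true] := by
          rw [h6.1, ← hp']
          exact h1
        exact pre_no_TTF (by omega) h7
      | succ i'' =>
        -- l₂ ends with [true, true]; but positions 3,4 of PB2 are [false, true]
        have heq' : ([true, true] : List Bool) ++ [false, true]
            = (l₁ ++ List.replicate i'' true) ++ [true, true] := by
          have hrep : List.replicate (i'' + 1 + 1) true
              = List.replicate i'' true ++ [true, true] := by
            rw [show i'' + 1 + 1 = i'' + 2 from rfl, List.replicate_add]
            rfl
          simpa [hrep, List.append_assoc] using heq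
        have h6 := List.append_inj' heq' (by simp)
        have := h6.2
        simp at this

lemma no_FT_shape : ∀ {l : List Bool}, ¬ (([false, true] : List Bool) <+ l) →
    ∃ i j, l = List.replicate i true ++ List.replicate j false := by
  intro l
  induction l with
  | nil => exact fun _ => ⟨0, 0, rfl⟩
  | cons b l' ih =>
    intro h
    cases b with
    | true =>
      have h' : ¬ (([false, true] : List Bool) <+ l') := by
        intro hh
        exact h (hh.trans (List.sublist_cons_self true l'))
      obtain ⟨i, j, rfl⟩ := ih h'
      exact ⟨i + 1, j, by simp [List.replicate_succ]⟩
    | false =>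
      have hT : true ∉ l' := by
        intro hT
        exact h (List.cons_sublist_cons.mpr (List.singleton_sublist.mpr hT))
      refine ⟨0, l'.length + 1, ?_⟩
      have : ∀ x ∈ l', x = false := by
        intro x hx
        cases x with
        | false => rfl
        | true => exact absurd hx hT
      have hrep : l' = List.replicate l'.length false :=
        List.eq_replicate_iff.mpr ⟨rfl, this⟩
      simp [List.replicate_succ, ← hrep]

lemma no_TF_shape : ∀ {l : List Bool}, ¬ (([true, false] : List Bool) <+ l) →
    ∃ i j, l = List.replicate i false ++ List.replicate j true := by
  intro l
  induction l with
  | nil => exact fun _ => ⟨0, 0, rfl⟩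
  | cons b l' ih =>
    intro h
    cases b with
    | false =>
      have h' : ¬ (([true, false] : List Bool) <+ l') := by
        intro hh
        exact h (hh.trans (List.sublist_cons_self false l'))
      obtain ⟨i, j, rfl⟩ := ih h'
      exact ⟨i + 1, j, by simp [List.replicate_succ]⟩
    | true =>
      have hF : false ∉ l' := by
        intro hF
        exact h (List.cons_sublist_cons.mpr (List.singleton_sublist.mpr hF))
      refine ⟨0, l'.length + 1, ?_⟩
      have : ∀ x ∈ l', x = true := by
        intro x hx
        cases x with
        | true => rfl
        | false => exact absurd hx hF
      have hrep : l' = List.replicate l'.length true :=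
        List.eq_replicate_iff.mpr ⟨rfl, this⟩
      simp [List.replicate_succ, ← hrep]

lemma suf_no_FT {w : List Bool} (h : ¬ ((PB2 : List Bool) <+ w))
    (hsufne : (splitT 2 w).2 ≠ []) : ¬ (([false, true] : List Bool) <+ (splitT 2 w).2) := by
  obtain ⟨hc2, p', hp'⟩ := sp_ends 2 w (by omega) hsufne
  intro hft
  apply h
  have hcp' : p'.count true = 1 := by
    rw [hp'] at hc2
    simp [List.count_append] at hc2
    omega
  have hmem : true ∈ p' := by
    by_contra hnm
    have := List.count_eq_zero.mpr hnm
    omega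
  have hbig : ([true] ++ ([true] ++ [false, true]) : List Bool)
      <+ p' ++ ([true] ++ (splitT 2 w).2) :=
    (List.singleton_sublist.mpr hmem).append ((List.Sublist.refl [true]).append hft)
  have hw : p' ++ ([true] ++ (splitT 2 w).2) = w := by
    rw [← List.append_assoc, ← hp', sp_join]
  rw [hw] at hbig
  exact hbig

lemma suf_no_TF {w : List Bool} (h : ¬ ((PB3 : List Bool) <+ w))
    (hsufne : (splitT 2 w).2 ≠ []) : ¬ (([true, false] : List Bool) <+ (splitT 2 w).2) := by
  obtain ⟨hc2, p', hp'⟩ := sp_ends 2 w (by omega) hsufne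
  intro htf
  apply h
  have hcp' : p'.count true = 1 := by
    rw [hp'] at hc2
    simp [List.count_append] at hc2
    omega
  have hmem : true ∈ p' := by
    by_contra hnm
    have := List.count_eq_zero.mpr hnm
    omega
  have hbig : ([true] ++ ([true] ++ [true, false]) : List Bool)
      <+ p' ++ ([true] ++ (splitT 2 w).2) :=
    (List.singleton_sublist.mpr hmem).append ((List.Sublist.refl [true]).append htf)
  have hw : p' ++ ([true] ++ (splitT 2 w).2) = w := by
    rw [← List.append_assoc, ← hp', sp_join]
  rw [hw] at hbig
  exact hbig

lemma BC_inv1 {w : List Bool} (h : ¬ ((PB2 : List Bool) <+ w)) : psiBC (phiBC w) = w := by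
  by_cases hsuf : (splitT 2 w).2 = []
  · have hj := sp_join 2 w
    rw [hsuf, List.append_nil] at hj
    have h1 : phiBC w = w := by rw [phiBC, hsuf, hj]; simp [sortF]
    have h2 : psiBC w = w := by rw [psiBC, hsuf, hj]; simp [sortT]
    rw [h1, h2]
  · obtain ⟨hc2, p', hp'⟩ := sp_ends 2 w (by omega) hsuf
    obtain ⟨i, j, hshape⟩ := no_FT_shape (suf_no_FT h hsuf)
    have hsort : sortF (splitT 2 w).2 = List.replicate j false ++ List.replicate i true := by
      rw [sortF, hshape]
      simp [List.count_append, List.count_replicate]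
    have hres : splitT 2 ((splitT 2 w).1 ++ (List.replicate j false ++ List.replicate i true))
        = ((splitT 2 w).1, List.replicate j false ++ List.replicate i true) :=
      sp_resplit _ _ 2 hc2 (Or.inr ⟨p', hp'⟩)
    rw [phiBC, hsort, psiBC, hres]
    have hst : sortT (List.replicate j false ++ List.replicate i true)
        = List.replicate i true ++ List.replicate j false := by
      rw [sortT]
      simp [List.count_append, List.count_replicate]
    rw [hst, ← hshape]
    exact sp_join 2 w

lemma BC_inv2 {w : List Bool} (h : ¬ ((PB3 : List Bool) <+ w)) : phiBC (psiBC w) = w := by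
  by_cases hsuf : (splitT 2 w).2 = []
  · have hj := sp_join 2 w
    rw [hsuf, List.append_nil] at hj
    have h1 : phiBC w = w := by rw [phiBC, hsuf, hj]; simp [sortF]
    have h2 : psiBC w = w := by rw [psiBC, hsuf, hj]; simp [sortT]
    rw [h2, h1]
  · obtain ⟨hc2, p', hp'⟩ := sp_ends 2 w (by omega) hsuf
    obtain ⟨i, j, hshape⟩ := no_TF_shape (suf_no_TF h hsuf)
    have hsort : sortT (splitT 2 w).2 = List.replicate j true ++ List.replicate i false := by
      rw [sortT, hshape]
      simp [List.count_append, List.count_replicate]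
    have hres : splitT 2 ((splitT 2 w).1 ++ (List.replicate j true ++ List.replicate i false))
        = ((splitT 2 w).1, List.replicate j true ++ List.replicate i false) :=
      sp_resplit _ _ 2 hc2 (Or.inr ⟨p', hp'⟩)
    rw [psiBC, hsort, phiBC, hres]
    have hst : sortF (List.replicate j true ++ List.replicate i false)
        = List.replicate i false ++ List.replicate j true := by
      rw [sortF]
      simp [List.count_append, List.count_replicate]
    rw [hst, ← hshape]
    exact sp_join 2 w

lemma length_eq_counts (l : List Bool) : l.length = l.count true + l.count false := by
  induction l with
  | nil => simp
  | cons b l' ih =>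
    simp only [List.length_cons, List.count_cons]
    cases b <;> simp <;> omega

lemma fa_append {R : Bool → ℕ → Prop} {a b : List Bool} {u w : List ℕ}
    (h1 : List.Forall₂ R a u) (h2 : List.Forall₂ R b w) :
    List.Forall₂ R (a ++ b) (u ++ w) := by
  induction h1 with
  | nil => exact h2
  | cons h _ ih => exact List.Forall₂.cons h ih

lemma cap_eq {L : List ℕ} {v : ℕ} {t r r' : List Bool}
    (hL : List.Pairwise (·≤·) L) (htF : ∀ b ∈ t, b = false)
    (hw : List.Forall₂ (fun b l => b = true → v < l) (t ++ true :: r) L)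
    (hcF : r'.count false = r.count false) (hlenr : r'.length = r.length) :
    (keepF L (t ++ true :: r)).map (fun l => min l v)
      = (keepF L (t ++ true :: r')).map (fun l => min l v) := by
  obtain ⟨L1, lu, L2, rfl, hlen1, h1, hlu, h2⟩ := fa_decomp hw
  have hvlu : v < lu := hlu rfl
  have hL2 : ∀ y ∈ L2, v < y := by
    intro y hy
    have hsorted : List.Pairwise (·≤·) (lu :: L2) :=
      List.Pairwise.sublist (List.sublist_append_right L1 (lu :: L2)) hL
    exact lt_of_lt_of_le hvlu (List.rel_of_pairwise_cons hsorted hy)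
  have hk1 : keepF (L1 ++ lu :: L2) (t ++ true :: r) = L1 ++ keepF L2 r := by
    rw [keepF_append (by omega : t.length = L1.length)]
    congr 1
    exact keepF_allF htF (by omega)
  have hk2 : keepF (L1 ++ lu :: L2) (t ++ true :: r') = L1 ++ keepF L2 r' := by
    rw [keepF_append (by omega : t.length = L1.length)]
    congr 1
    exact keepF_allF htF (by omega)
  rw [hk1, hk2, List.map_append, List.map_append]
  congr 1
  have key : ∀ (s : List Bool), s.length = L2.length →
      (keepF L2 s).map (fun l => min l v) = List.replicate (s.count false) v := by
    intro s hs
    apply List.eq_replicate_iff.mpr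
    constructor
    · rw [List.length_map, keepF_length hs]
    · intro b hb
      rw [List.mem_map] at hb
      obtain ⟨y, hy, rfl⟩ := hb
      have hyL : y ∈ L2 := keepF_mem hy
      have := hL2 y hyL
      omega
  rw [key r h2.length_eq, key r' (by rw [hlenr]; exact h2.length_eq), hcF]

/-! ### The level-by-level bijection -/

def seqMap (g : List Bool → List Bool) : ℕ → List ℕ → List ℕ
  | 0, e => e
  | c+1, e => mrg (c+1) (g (msk (c+1) e)) (seqMap g c (flt (c+1) e))

lemma main_lemma (g g' : List Bool → List Bool) (p q : List Bool)
    (hq : true ∈ q)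
    (hDp : ∀ v e, 0 < v → (∀ x ∈ e, x ≤ v) → (OccP p e ↔ (p <+ msk v e ∨ OccP p (flt v e))))
    (hDq : ∀ v e, 0 < v → (∀ x ∈ e, x ≤ v) → (OccP q e ↔ (q <+ msk v e ∨ OccP q (flt v e))))
    (hgood : ∀ w, ¬(p <+ w) → ¬(q <+ g w))
    (hnil : ∀ w, w.count true = 0 → g w = w)
    (hnil' : ∀ w, w.count true = 0 → g' w = w)
    (hcons : ∀ t r, (∀ b ∈ t, b = false) → ∃ r', g (t ++ true :: r) = t ++ true :: r' ∧
        r'.count false = r.count false ∧ r'.count true = r.count true)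
    (hinv : ∀ w, ¬(p <+ w) → g' (g w) = w) :
    ∀ c L e, List.Pairwise (·≤·) L →
      List.Forall₂ (fun x l => x < l ∧ x ≤ c) e L → ¬ OccP p e →
      List.Forall₂ (fun x l => x < l ∧ x ≤ c) (seqMap g c e) L ∧
        ¬ OccP q (seqMap g c e) ∧ seqMap g' c (seqMap g c e) = e := by
  intro c
  induction c with
  | zero =>
    intro L e hL he hav
    refine ⟨he, ?_, rfl⟩
    rintro ⟨b, x, hx, hs⟩
    have hb : b ∈ e := hs.subset (mem_numpat_self hq b x)
    have := fa_le he b hb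
    omega
  | succ c ih =>
    intro L e hL he hav
    have hmem : ∀ x ∈ e, x ≤ c + 1 := fa_le he
    have hD := hDp (c+1) e (by omega) hmem
    have hGw : ¬ (p <+ msk (c+1) e) := fun hh => hav (hD.mpr (Or.inl hh))
    have hOf : ¬ OccP p (flt (c+1) e) := fun hh => hav (hD.mpr (Or.inr hh))
    have hfL0 := fa_filter (c+1) he
    have hfL : List.Forall₂ (fun x l => x < l ∧ x ≤ c) (flt (c+1) e) (keepF L (msk (c+1) e)) := by
      refine hfL0.imp ?_
      rintro x l ⟨⟨h1, h2⟩, h3⟩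
      have hxv : x ≠ c + 1 := by simpa using h3
      exact ⟨h1, by omega⟩
    have hLsub : keepF L (msk (c+1) e) <+ L := keepF_sublist L (msk (c+1) e)
    have hLm : List.Pairwise (·≤·) (keepF L (msk (c+1) e)) := List.Pairwise.sublist hLsub hL
    obtain ⟨hb', ho', hrt'⟩ := ih (keepF L (msk (c+1) e)) (flt (c+1) e) hLm hfL hOf
    have hlen_e : e.length = L.length := he.length_eq
    have hlen_w : (msk (c+1) e).length = L.length := by rw [msk, List.length_map, hlen_e]
    have hf'len : (seqMap g c (flt (c+1) e)).length = (msk (c+1) e).count false := by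
      rw [hb'.length_eq, keepF_length hlen_w]
    have hf'le : ∀ x ∈ seqMap g c (flt (c+1) e), x ≤ c := fa_le hb'
    have hf'ne : ∀ x ∈ seqMap g c (flt (c+1) e), (x == (c+1)) = false := by
      intro x hx
      have := hf'le x hx
      simp
      omega
    by_cases hw0 : (msk (c+1) e).count true = 0
    · -- the top value does not occur in e
      have hwF : ∀ b ∈ msk (c+1) e, b = false := by
        intro b hb
        cases b with
        | false => rfl
        | true => exact absurd hb (List.count_eq_zero.mp hw0)
      have hge : g (msk (c+1) e) = msk (c+1) e := hnil _ hw0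
      have hKF : keepF L (msk (c+1) e) = L := keepF_allF hwF hlen_w
      have hfe : flt (c+1) e = e := by
        rw [flt, List.filter_eq_self]
        intro a ha
        have hab : (a == (c+1)) = false := by
          cases hab : (a == (c+1)) with
          | false => rfl
          | true =>
            exfalso
            apply List.count_eq_zero.mp hw0
            rw [msk, List.mem_map]
            exact ⟨a, ha, hab⟩
        simp [hab]
      rw [hfe] at hb' ho' hrt' hf'len hf'ne
      rw [hKF] at hb'
      have hcountlen : (msk (c+1) e).count false = (msk (c+1) e).length := by
        have := length_eq_counts (msk (c+1) e)
        omega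
      have hseq : seqMap g (c+1) e = seqMap g c e := by
        show mrg (c+1) (g (msk (c+1) e)) (seqMap g c (flt (c+1) e)) = seqMap g c e
        rw [hfe, hge]
        exact mrg_allF hwF (by rw [hf'len, hcountlen])
      rw [hseq]
      refine ⟨hb'.imp ?_, ho', ?_⟩
      · rintro x l ⟨h1, h2⟩
        exact ⟨h1, by omega⟩
      · -- inverse map also acts trivially
        have hwF2 : (msk (c+1) (seqMap g c e)).count true = 0 := by
          rw [List.count_eq_zero]
          intro hmem2
          rw [msk, List.mem_map] at hmem2
          obtain ⟨x, hx1, hx2⟩ := hmem2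
          exact absurd hx2 (by simp [hf'ne x hx1])
        have hge' : g' (msk (c+1) (seqMap g c e)) = msk (c+1) (seqMap g c e) := hnil' _ hwF2
        have hfe2 : flt (c+1) (seqMap g c e) = seqMap g c e := by
          rw [flt, List.filter_eq_self]
          intro a ha
          simp [hf'ne a ha]
        show mrg (c+1) (g' (msk (c+1) (seqMap g c e)))
            (seqMap g' c (flt (c+1) (seqMap g c e))) = e
        rw [hge', hfe2, hrt']
        apply mrg_allF
        · intro b hb
          cases b with
          | false => rfl
          | true => exact absurd hb (List.count_eq_zero.mp hwF2)
        · rw [msk, List.length_map, hb'.length_eq, hlen_e]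
    · -- the top value occurs in e
      have hwT : true ∈ msk (c+1) e := by
        by_contra hnm
        exact hw0 (List.count_eq_zero.mpr hnm)
      obtain ⟨t, r, htF, hwEq⟩ := exists_split_true hwT
      obtain ⟨r', hgEq0, hcF, hcT⟩ := hcons t r htF
      have hgEq : g (msk (c+1) e) = t ++ true :: r' := by rw [hwEq]; exact hgEq0
      have hcompat : List.Forall₂ (fun b l => b = true → (c+1) < l) (msk (c+1) e) L :=
        fa_compat he
      have hcompat_w : List.Forall₂ (fun b l => b = true → (c+1) < l) (t ++ true :: r) L := by
        rw [← hwEq]; exact hcompat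
      have hlenr : r'.length = r.length := by
        rw [length_eq_counts r', length_eq_counts r, hcF, hcT]
      have hcap := cap_eq hL htF hcompat_w hcF hlenr
      rw [hwEq] at hb'
      have hb'2 := fa_recap (show c < c + 1 by omega) hb' hcap
      obtain ⟨L1, lu, L2, hLeq, hlen1, hfa_t, hfa_lu, hfa_r⟩ := fa_decomp hcompat_w
      have hvlu : (c+1) < lu := hfa_lu rfl
      have hL2 : ∀ y ∈ L2, (c+1) < y := by
        intro y hy
        have hsorted : List.Pairwise (·≤·) (lu :: L2) := by
          rw [hLeq] at hL
          exact List.Pairwise.sublist (List.sublist_append_right L1 (lu :: L2)) hL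
        exact lt_of_lt_of_le hvlu (List.rel_of_pairwise_cons hsorted hy)
      have hfa_r' : List.Forall₂ (fun b l => b = true → (c+1) < l) r' L2 :=
        fa_of_mem (by rw [hlenr, hfa_r.length_eq]) (fun y hy b _ => hL2 y hy)
      have hcompat' : List.Forall₂ (fun b l => b = true → (c+1) < l) (t ++ true :: r') L := by
        rw [hLeq]
        exact fa_append hfa_t (List.Forall₂.cons hfa_lu hfa_r')
      have hf'len' : (seqMap g c (flt (c+1) e)).length = (t ++ true :: r').count false := by
        rw [hf'len, hwEq]
        simp [List.count_append, List.count_cons, hcF]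
      have hseq : seqMap g (c+1) e = mrg (c+1) (t ++ true :: r') (seqMap g c (flt (c+1) e)) := by
        show mrg (c+1) (g (msk (c+1) e)) (seqMap g c (flt (c+1) e)) = _
        rw [hgEq]
      have hbounds : List.Forall₂ (fun x l => x < l ∧ x ≤ c + 1)
          (mrg (c+1) (t ++ true :: r') (seqMap g c (flt (c+1) e))) L :=
        fa_merge (by omega) hb'2 hcompat' hf'len'
      have hmskE : msk (c+1) (mrg (c+1) (t ++ true :: r') (seqMap g c (flt (c+1) e)))
          = t ++ true :: r' := mrg_msk hf'ne hf'len'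
      have hfltE : flt (c+1) (mrg (c+1) (t ++ true :: r') (seqMap g c (flt (c+1) e)))
          = seqMap g c (flt (c+1) e) := mrg_flt hf'ne hf'len'
      have havE : ¬ OccP q (mrg (c+1) (t ++ true :: r') (seqMap g c (flt (c+1) e))) := by
        intro hocc
        have hEle := fa_le hbounds
        rcases (hDq (c+1) _ (by omega) hEle).mp hocc with hmask | hflt
        · rw [hmskE] at hmask
          exact (hgood (msk (c+1) e) hGw) (by rw [hgEq]; exact hmask)
        · rw [hfltE] at hflt
          exact ho' hflt
      refine ⟨?_, ?_, ?_⟩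
      · rw [hseq]; exact hbounds
      · rw [hseq]; exact havE
      · rw [hseq]
        show mrg (c+1) (g' (msk (c+1) _)) (seqMap g' c (flt (c+1) _)) = e
        rw [hmskE, hfltE, hrt']
        have hback : g' (t ++ true :: r') = msk (c+1) e := by
          rw [← hgEq]
          exact hinv _ hGw
        rw [hback]
        exact mrg_msk_flt (c+1) e

/-! ### Final assembly -/

lemma bridge {e L : List ℕ} :
    (e.length = L.length ∧ ∀ i : ℕ, i < L.length → e[i]! < L[i]!) ↔
      List.Forall₂ (· < ·) e L := by
  rw [List.forall₂_iff_get]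
  constructor
  · rintro ⟨hlen, h⟩
    refine ⟨hlen, fun i h1 h2 => ?_⟩
    have h3 := h i h2
    rw [getElem!_pos e i (by omega), getElem!_pos L i h2] at h3
    simpa [List.get_eq_getElem] using h3
  · rintro ⟨hlen, h⟩
    refine ⟨hlen, fun i hi => ?_⟩
    have h3 := h i (by omega) hi
    rw [getElem!_pos e i (by omega), getElem!_pos L i hi]
    simpa [List.get_eq_getElem] using h3

lemma le_foldr_max (L : List ℕ) : ∀ l ∈ L, l ≤ L.foldr max 0 := by
  induction L with
  | nil => simp
  | cons a L' ih =>
    intro l hl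
    simp only [List.foldr_cons]
    rcases List.mem_cons.mp hl with rfl | hl
    · exact le_max_left _ _
    · exact le_trans (ih l hl) (le_max_right _ _)

lemma sinv_eq (S : Finset ℕ) (pat : List ℕ) (pb : List Bool)
    (hpat : ∀ e, ContainsPat e pat ↔ OccP pb e) :
    SInvAvoid S pat = {e | List.Forall₂
        (fun x l => x < l ∧ x ≤ (S.sort (·≤·)).foldr max 0) e (S.sort (·≤·)) ∧
      ¬ OccP pb e} := by
  ext e
  simp only [SInvAvoid, SInvSeq, Set.mem_setOf_eq, AvoidsPat, Set.mem_sep_iff]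
  constructor
  · rintro ⟨⟨hlen, hbound⟩, hav⟩
    have hcard : (S.sort (·≤·)).length = S.card := Finset.length_sort _
    have hfa : List.Forall₂ (· < ·) e (S.sort (·≤·)) :=
      bridge.mp ⟨by rw [hlen, hcard], fun i hi => hbound i (by omega)⟩
    exact ⟨fa_cap0 hfa (le_foldr_max _), fun ho => hav ((hpat e).mpr ho)⟩
  · rintro ⟨hfa, hocc⟩
    have hfa' : List.Forall₂ (· < ·) e (S.sort (·≤·)) := hfa.imp (fun _ _ h => h.1)
    obtain ⟨hlen, hbound⟩ := bridge.mpr hfa'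
    have hcard : (S.sort (·≤·)).length = S.card := Finset.length_sort _
    exact ⟨⟨by rw [hlen, hcard], fun i hi => hbound i (by omega)⟩,
      fun hc => hocc ((hpat e).mp hc)⟩

lemma ncard_eq_of_maps {A B : Set (List ℕ)} {F G : List ℕ → List ℕ}
    (hF : ∀ e ∈ A, F e ∈ B) (hG : ∀ e ∈ B, G e ∈ A)
    (hGF : ∀ e ∈ A, G (F e) = e) (hFG : ∀ e ∈ B, F (G e) = e) :
    A.ncard = B.ncard := by
  have hbij : Set.BijOn F A B :=
    Set.InvOn.bijOn ⟨fun e he => hGF e he, fun e he => hFG e he⟩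
      (fun e he => hF e he) (fun e he => hG e he)
  rw [← hbij.image_eq]
  exact (Set.ncard_image_of_injOn hbij.injOn).symm

/-- Theorem: `|I_S(1011)| = |I_S(1101)| = |I_S(1110)|` for any finite set `S`
of positive integers. -/
theorem stmt_5 (S : Finset ℕ) (hS : ∀ x ∈ S, 0 < x) :
    (SInvAvoid S [1, 0, 1, 1]).ncard = (SInvAvoid S [1, 1, 0, 1]).ncard ∧
    (SInvAvoid S [1, 1, 0, 1]).ncard = (SInvAvoid S [1, 1, 1, 0]).ncard := by
  classical
  have hL : List.Pairwise (·≤·) (S.sort (·≤·)) := Finset.pairwise_sort _ _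
  set L := S.sort (·≤·) with hLdef
  set c := L.foldr max 0 with hcdef
  have e1 := sinv_eq S [1,0,1,1] PB1 contains1
  have e2 := sinv_eq S [1,1,0,1] PB2 contains2
  have e3 := sinv_eq S [1,1,1,0] PB3 contains3
  rw [e1, e2, e3]
  have m12 := main_lemma revMid revMid PB1 PB2 (by simp) occD1 occD2
    (fun w h => GT12 h) (fun w h => revMid_nilT h) (fun w h => revMid_nilT h)
    (fun t r htF => revMid_cons htF) (fun w _ => revMid_invol w)
  have m21 := main_lemma revMid revMid PB2 PB1 (by simp) occD2 occD1
    (fun w h => GT21 h) (fun w h => revMid_nilT h) (fun w h => revMid_nilT h)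
    (fun t r htF => revMid_cons htF) (fun w _ => revMid_invol w)
  have m23 := main_lemma phiBC psiBC PB2 PB3 (by simp) occD2 occD3
    (fun w h => GT23 h) (fun w h => phiBC_nilT h) (fun w h => psiBC_nilT h)
    (fun t r htF => phiBC_cons htF r) (fun w h => BC_inv1 h)
  have m32 := main_lemma psiBC phiBC PB3 PB2 (by simp) occD3 occD2
    (fun w h => GT32 h) (fun w h => psiBC_nilT h) (fun w h => phiBC_nilT h)
    (fun t r htF => psiBC_cons htF r) (fun w h => BC_inv2 h)
  constructor
  · refine ncard_eq_of_maps (F := seqMap revMid c) (G := seqMap revMid c) ?_ ?_ ?_ ?_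
    · intro e he
      obtain ⟨h1, h2, -⟩ := m12 c L e hL he.1 he.2
      exact ⟨h1, h2⟩
    · intro e he
      obtain ⟨h1, h2, -⟩ := m21 c L e hL he.1 he.2
      exact ⟨h1, h2⟩
    · intro e he
      exact (m12 c L e hL he.1 he.2).2.2
    · intro e he
      exact (m21 c L e hL he.1 he.2).2.2
  · refine ncard_eq_of_maps (F := seqMap phiBC c) (G := seqMap psiBC c) ?_ ?_ ?_ ?_
    · intro e he
      obtain ⟨h1, h2, -⟩ := m23 c L e hL he.1 he.2
      exact ⟨h1, h2⟩
    · intro e he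
      obtain ⟨h1, h2, -⟩ := m32 c L e hL he.1 he.2
      exact ⟨h1, h2⟩
    · intro e he
      exact (m23 c L e hL he.1 he.2).2.2
    · intro e he
      exact (m32 c L e hL he.1 he.2).2.2
end
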